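/- arXiv:1307.5610 — 8 statements merged into one kernel-verified Lean document; each statement's English description precedes it below -/
import Mathlib

section
/- Let X_n be defined by X_0 = 0 and X_n =^d X_{I_n} + 1 for n ≥ 1, where P(I_n = k) = C(n,k)(p^k q^{n-k} − p^k(q−p)^{n-k})/(1−q^n). Then the exponential generating function P(z,y) := ∑_{n≥0} E(e^{X_n y}) z^n/n! satisfies the functional equation P(z,y) = e^y (e^{qz} − e^{(q−p)z}) P(pz, y) + P(qz, y). -/
/-- The EGF `P(z) = ∑_{n≥0} E(e^{X_n y}) z^n/n!` of the binomial splitting process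
satisfies `P(z) = e^y (e^{qz} − e^{(q−p)z}) P(pz) + P(qz)`.
Here `M n = E(e^{X_n y})` for a fixed real `y`, determined by the distributional
recurrence `X_n =^d X_{I_n} + 1`. -/
theorem stmt_4 (p q y : ℝ) (hp : 0 < p) (hpq : p ≤ q) (hq : q = 1 - p)
    (M : ℕ → ℝ) (hM0 : M 0 = 1)
    (hMrec : ∀ n, 1 ≤ n → M n = Real.exp y *
      ∑ k ∈ Finset.range n, (n.choose k : ℝ) *
        (p ^ k * q ^ (n - k) - p ^ k * (q - p) ^ (n - k)) / (1 - q ^ n) * M k)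
    (P : ℝ → ℝ) (hP : ∀ z, P z = ∑' n : ℕ, M n * z ^ n / (n.factorial : ℝ)) :
    ∀ z : ℝ, P z = Real.exp y * (Real.exp (q * z) - Real.exp ((q - p) * z)) * P (p * z)
      + P (q * z) := by
  have hq0 : 0 < q := lt_of_lt_of_le hp hpq
  have hq1 : q < 1 := by rw [hq]; linarith
  have hqp0 : 0 ≤ q - p := sub_nonneg.mpr hpq
  have hqp1 : q - p ≤ 1 := by linarith
  have hDpos : ∀ n : ℕ, 1 ≤ n → 0 < 1 - q ^ n := by
    intro n hn
    have : q ^ n < 1 := pow_lt_one₀ hq0.le hq1 (by omega)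
    linarith
  -- numerator nonneg
  have wnonneg : ∀ n k : ℕ, 0 ≤ p ^ k * q ^ (n - k) - p ^ k * (q - p) ^ (n - k) := by
    intro n k
    have h1 : (q - p) ^ (n - k) ≤ q ^ (n - k) := pow_le_pow_left₀ hqp0 (by linarith) _
    have h2 : (0:ℝ) ≤ p ^ k := pow_nonneg hp.le k
    nlinarith
  -- sum of numerators
  have wsum : ∀ n : ℕ, 1 ≤ n →
      ∑ k ∈ Finset.range n, (n.choose k : ℝ) *
        (p ^ k * q ^ (n - k) - p ^ k * (q - p) ^ (n - k)) = 1 - q ^ n := by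
    intro n hn
    have h1 : ∑ k ∈ Finset.range (n + 1), p ^ k * q ^ (n - k) * (n.choose k : ℝ)
        = (p + q) ^ n := (add_pow p q n).symm
    have h2 : ∑ k ∈ Finset.range (n + 1), p ^ k * (q - p) ^ (n - k) * (n.choose k : ℝ)
        = (p + (q - p)) ^ n := (add_pow p (q - p) n).symm
    rw [Finset.sum_range_succ] at h1 h2
    have hpq1 : p + q = 1 := by rw [hq]; ring
    have hqq : p + (q - p) = q := by ring
    rw [hpq1, one_pow] at h1
    rw [hqq] at h2
    simp only [Nat.sub_self, pow_zero, mul_one, Nat.choose_self, Nat.cast_one] at h1 h2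
    have : ∑ k ∈ Finset.range n, (n.choose k : ℝ) *
        (p ^ k * q ^ (n - k) - p ^ k * (q - p) ^ (n - k))
        = (∑ k ∈ Finset.range n, p ^ k * q ^ (n - k) * (n.choose k : ℝ))
          - ∑ k ∈ Finset.range n, p ^ k * (q - p) ^ (n - k) * (n.choose k : ℝ) := by
      rw [← Finset.sum_sub_distrib]
      apply Finset.sum_congr rfl
      intro k _; ring
    rw [this]
    linarith
  -- growth bound on M
  set B := Real.exp |y| with hB
  have hB1 : (1:ℝ) ≤ B := Real.one_le_exp (abs_nonneg y)
  have hB0 : (0:ℝ) < B := lt_of_lt_of_le one_pos hB1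
  have hey : Real.exp y ≤ B := Real.exp_le_exp.mpr (le_abs_self y)
  have hey0 : (0:ℝ) < Real.exp y := Real.exp_pos y
  have Mbound : ∀ n, |M n| ≤ B ^ n := by
    intro n
    induction n using Nat.strong_induction_on with
    | _ n ih =>
      match n with
      | 0 => simp [hM0]
      | Nat.succ m =>
        set n := m + 1
        have hn : 1 ≤ n := Nat.le_add_left 1 m
        have hD := hDpos n hn
        rw [hMrec n hn]
        rw [abs_mul, abs_of_pos hey0]
        have hsb : |∑ k ∈ Finset.range n, (n.choose k : ℝ) *
            (p ^ k * q ^ (n - k) - p ^ k * (q - p) ^ (n - k)) / (1 - q ^ n) * M k|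
            ≤ B ^ m := by
          calc |∑ k ∈ Finset.range n, (n.choose k : ℝ) *
              (p ^ k * q ^ (n - k) - p ^ k * (q - p) ^ (n - k)) / (1 - q ^ n) * M k|
              ≤ ∑ k ∈ Finset.range n, |(n.choose k : ℝ) *
              (p ^ k * q ^ (n - k) - p ^ k * (q - p) ^ (n - k)) / (1 - q ^ n) * M k| :=
                Finset.abs_sum_le_sum_abs _ _
            _ ≤ ∑ k ∈ Finset.range n, (n.choose k : ℝ) *
              (p ^ k * q ^ (n - k) - p ^ k * (q - p) ^ (n - k)) / (1 - q ^ n) * B ^ m := by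
                apply Finset.sum_le_sum
                intro k hk
                have hk' : k < n := Finset.mem_range.mp hk
                have hwk : 0 ≤ (n.choose k : ℝ) *
                    (p ^ k * q ^ (n - k) - p ^ k * (q - p) ^ (n - k)) / (1 - q ^ n) := by
                  apply div_nonneg _ hD.le
                  exact mul_nonneg (Nat.cast_nonneg _) (wnonneg n k)
                rw [abs_mul, abs_of_nonneg hwk]
                apply mul_le_mul_of_nonneg_left _ hwk
                calc |M k| ≤ B ^ k := ih k hk'
                  _ ≤ B ^ m := pow_le_pow_right₀ hB1 (by omega)
            _ = (∑ k ∈ Finset.range n, (n.choose k : ℝ) *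
              (p ^ k * q ^ (n - k) - p ^ k * (q - p) ^ (n - k))) / (1 - q ^ n) * B ^ m := by
                rw [Finset.sum_div, Finset.sum_mul]
            _ = B ^ m := by rw [wsum n hn, div_self hD.ne', one_mul]
        calc Real.exp y * |∑ k ∈ Finset.range n, (n.choose k : ℝ) *
            (p ^ k * q ^ (n - k) - p ^ k * (q - p) ^ (n - k)) / (1 - q ^ n) * M k|
            ≤ B * B ^ m := by
              apply mul_le_mul hey hsb (abs_nonneg _) hB0.le
          _ = B ^ n := by rw [← pow_succ']
  -- summability of the EGF of M at any point
  have Ssum : ∀ w : ℝ, Summable (fun n : ℕ => ‖M n * w ^ n / (n.factorial : ℝ)‖) := by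
    intro w
    refine Summable.of_nonneg_of_le (fun n => norm_nonneg _) (fun n => ?_)
      (Real.summable_pow_div_factorial (B * |w|))
    rw [Real.norm_eq_abs, abs_div, abs_mul, abs_pow, Nat.abs_cast, mul_pow]
    gcongr
    exact Mbound n
  have Ssum' : ∀ w : ℝ, Summable (fun n : ℕ => M n * w ^ n / (n.factorial : ℝ)) :=
    fun w => (Ssum w).of_norm
  -- exp as tsum
  have expt : ∀ x : ℝ, Real.exp x = ∑' n : ℕ, x ^ n / (n.factorial : ℝ) := by
    intro x
    rw [Real.exp_eq_exp_ℝ, NormedSpace.exp_eq_tsum_div]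
  intro z
  -- the "g" series
  set g : ℕ → ℝ := fun m => Real.exp y * ((q * z) ^ m / (m.factorial : ℝ)
    - ((q - p) * z) ^ m / (m.factorial : ℝ)) with hg_def
  have gsum_norm : Summable (fun m => ‖g m‖) := by
    refine Summable.of_nonneg_of_le (fun n => norm_nonneg _) (fun m => ?_)
      (f := fun m => Real.exp y * (|q * z| ^ m / (m.factorial : ℝ)
        + |(q - p) * z| ^ m / (m.factorial : ℝ)))
      ?_
    · rw [hg_def, Real.norm_eq_abs, abs_mul, abs_of_pos hey0]
      apply mul_le_mul_of_nonneg_left _ hey0.le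
      calc |(q * z) ^ m / (m.factorial : ℝ) - ((q - p) * z) ^ m / (m.factorial : ℝ)|
          ≤ |(q * z) ^ m / (m.factorial : ℝ)| + |((q - p) * z) ^ m / (m.factorial : ℝ)| :=
            abs_sub _ _
        _ = |q * z| ^ m / (m.factorial : ℝ) + |(q - p) * z| ^ m / (m.factorial : ℝ) := by
            rw [abs_div, abs_div, abs_pow, abs_pow, Nat.abs_cast]
    · exact ((Real.summable_pow_div_factorial |q * z|).add
        (Real.summable_pow_div_factorial |(q - p) * z|)).mul_left _
  have gsum : Summable g := gsum_norm.of_norm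
  have gval : (∑' m, g m) = Real.exp y * (Real.exp (q * z) - Real.exp ((q - p) * z)) := by
    rw [hg_def, tsum_mul_left, Summable.tsum_sub (Real.summable_pow_div_factorial (q * z))
      (Real.summable_pow_div_factorial ((q - p) * z)), expt (q * z), expt ((q - p) * z)]
  -- the "f" series
  set f : ℕ → ℝ := fun k => M k * (p * z) ^ k / (k.factorial : ℝ) with hf_def
  have fval : (∑' k, f k) = P (p * z) := (hP (p * z)).symm
  -- Cauchy product
  have cauchy := tsum_mul_tsum_eq_tsum_sum_range_of_summable_norm
    (f := f) (g := g) (Ssum (p * z)) gsum_norm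
  -- per-coefficient identity
  have key : ∀ n : ℕ, ∑ k ∈ Finset.range (n + 1), f k * g (n - k)
      = M n * (1 - q ^ n) * z ^ n / (n.factorial : ℝ) := by
    intro n
    rcases Nat.eq_zero_or_pos n with rfl | hn
    · simp [hf_def, hg_def]
    · have hD := hDpos n hn
      -- drop the k = n term (it vanishes)
      rw [Finset.sum_range_succ]
      have htop : f n * g (n - n) = 0 := by
        simp [hg_def, Nat.sub_self]
      rw [htop, add_zero]
      -- rewrite each term
      have hterm : ∀ k ∈ Finset.range n, f k * g (n - k)
          = Real.exp y * ((n.choose k : ℝ) *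
            (p ^ k * q ^ (n - k) - p ^ k * (q - p) ^ (n - k)) * M k)
            * z ^ n / (n.factorial : ℝ) := by
        intro k hk
        have hk' : k < n := Finset.mem_range.mp hk
        have hkn : k ≤ n := hk'.le
        have hchoose : (n.choose k : ℝ) = (n.factorial : ℝ) /
            ((k.factorial : ℝ) * ((n - k).factorial : ℝ)) := Nat.cast_choose ℝ hkn
        have hzz : z ^ k * z ^ (n - k) = z ^ n := by
          rw [← pow_add]; congr 1; omega
        have hkf : ((k.factorial : ℝ)) ≠ 0 := by exact_mod_cast (Nat.factorial_pos k).ne'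
        have hmf : (((n - k).factorial : ℝ)) ≠ 0 := by
          exact_mod_cast (Nat.factorial_pos (n - k)).ne'
        have hnf : ((n.factorial : ℝ)) ≠ 0 := by exact_mod_cast (Nat.factorial_pos n).ne'
        rw [hf_def, hg_def, hchoose]
        simp only [mul_pow]
        rw [← hzz]
        field_simp
      rw [Finset.sum_congr rfl hterm]
      -- now use the recurrence
      have hrec := hMrec n hn
      have hMeq : M n * (1 - q ^ n) = Real.exp y *
          ∑ k ∈ Finset.range n, (n.choose k : ℝ) *
            (p ^ k * q ^ (n - k) - p ^ k * (q - p) ^ (n - k)) * M k := by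
        rw [hrec, mul_assoc, Finset.sum_mul]
        congr 1
        apply Finset.sum_congr rfl
        intro k _
        field_simp
      rw [hMeq]
      rw [Finset.mul_sum, Finset.sum_mul, Finset.sum_div]
  -- assemble
  have htsum_eq : ∑' n : ℕ, ∑ k ∈ Finset.range (n + 1), f k * g (n - k)
      = P z - P (q * z) := by
    rw [tsum_congr key, hP z, hP (q * z)]
    have : (fun n : ℕ => M n * (1 - q ^ n) * z ^ n / (n.factorial : ℝ))
        = fun n : ℕ => M n * z ^ n / (n.factorial : ℝ)
          - M n * (q * z) ^ n / (n.factorial : ℝ) := by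
      funext n
      rw [mul_pow]
      ring
    rw [this, Summable.tsum_sub (Ssum' z) (Ssum' (q * z))]
  have final : P (p * z) * (Real.exp y * (Real.exp (q * z) - Real.exp ((q - p) * z)))
      = P z - P (q * z) := by
    rw [← fval, ← gval, cauchy, htsum_eq]
  linarith [final]
end

section
/- Let f̃_1(z) := e^{-z} ∑_{n≥0} E(X_n) z^n/n! be the Poisson generating function of the mean of the binomial splitting process X_n. Then f̃_1 satisfies f̃_1(z) = (1 − e^{-pz}) f̃_1(pz) + e^{-pz} f̃_1(qz) + 1 − e^{-pz}, with f̃_1(0) = 0. -/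
open Finset

set_option maxHeartbeats 1000000 in
/-- The Poisson generating function `f̃₁(z) = e^{-z} ∑_{n≥0} E(X_n) z^n/n!` of the mean
of the binomial splitting process satisfies
`f̃₁(z) = (1 − e^{-pz}) f̃₁(pz) + e^{-pz} f̃₁(qz) + 1 − e^{-pz}`, with `f̃₁(0) = 0`.
Here `μ n = E(X_n)`, determined by `μ 0 = 0` and `μ n = 1 + ∑_k P(I_n = k) μ k`. -/
theorem stmt_6 (p q : ℝ) (hp : 0 < p) (hpq : p ≤ q) (hq : q = 1 - p)
    (μ : ℕ → ℝ) (hμ0 : μ 0 = 0)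
    (hμrec : ∀ n, 1 ≤ n → μ n = 1 +
      ∑ k ∈ Finset.range n, (n.choose k : ℝ) *
        (p ^ k * q ^ (n - k) - p ^ k * (q - p) ^ (n - k)) / (1 - q ^ n) * μ k)
    (f1 : ℝ → ℝ)
    (hf1 : ∀ z, f1 z = Real.exp (-z) * ∑' n : ℕ, μ n * z ^ n / (n.factorial : ℝ)) :
    f1 0 = 0 ∧ ∀ z : ℝ, f1 z = (1 - Real.exp (-(p * z))) * f1 (p * z)
      + Real.exp (-(p * z)) * f1 (q * z) + 1 - Real.exp (-(p * z)) := by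
  have hq0 : 0 < q := lt_of_lt_of_le hp hpq
  have hq1 : q < 1 := by rw [hq]; linarith
  have hs0 : (0:ℝ) ≤ q - p := by linarith
  have hpq1 : p + q = 1 := by rw [hq]; ring
  have expeq : ∀ x : ℝ, Real.exp x = ∑' n : ℕ, x ^ n / (n.factorial : ℝ) := by
    intro x
    rw [Real.exp_eq_exp_ℝ, NormedSpace.exp_eq_tsum_div]
  have hbin : ∀ (x y : ℝ) (n : ℕ),
      ∑ k ∈ range (n+1), (n.choose k : ℝ) * (x ^ k * y ^ (n-k)) = (x + y) ^ n := by
    intro x y n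
    rw [add_pow]
    exact Finset.sum_congr rfl fun k _ => by ring
  have hdiff : ∀ n k : ℕ, (0:ℝ) ≤ p ^ k * q ^ (n-k) - p ^ k * (q - p) ^ (n-k) := by
    intro n k
    have : (q - p) ^ (n-k) ≤ q ^ (n-k) := pow_le_pow_left₀ hs0 (by linarith) _
    nlinarith [pow_nonneg hp.le k]
  have hdiffle : ∀ n k : ℕ,
      p ^ k * q ^ (n-k) - p ^ k * (q - p) ^ (n-k) ≤ p ^ k * q ^ (n-k) := by
    intro n k
    nlinarith [pow_nonneg hp.le k, pow_nonneg hs0 (n-k)]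
  have hws : ∀ n : ℕ, 1 ≤ n → ∑ k ∈ range n,
      (n.choose k : ℝ) * (p ^ k * q ^ (n-k) - p ^ k * (q - p) ^ (n-k)) = 1 - q ^ n := by
    intro n hn
    have h1 : ∑ k ∈ range (n+1),
        (n.choose k : ℝ) * (p ^ k * q ^ (n-k) - p ^ k * (q - p) ^ (n-k))
        = 1 - q ^ n := by
      have := hbin p q n
      have h2 := hbin p (q - p) n
      rw [show p + (q - p) = q by ring] at h2
      rw [show (1:ℝ) - q ^ n = (p+q)^n - q^n by rw [hpq1]; simp, ← this, ← h2,
        ← Finset.sum_sub_distrib]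
      exact Finset.sum_congr rfl fun k _ => by ring
    rw [Finset.sum_range_succ] at h1
    simpa using h1
  have hμbd : ∀ n : ℕ, 0 ≤ μ n ∧ μ n ≤ n := by
    intro n
    induction n using Nat.strong_induction_on with
    | _ n ih =>
      rcases Nat.eq_zero_or_pos n with h | h
      · subst h; simp [hμ0]
      · have hqn : q ^ n < 1 := pow_lt_one₀ hq0.le hq1 (by omega)
        have hqpos : 0 < 1 - q ^ n := by linarith
        have hterm : ∀ k ∈ range n, (0:ℝ) ≤
            (n.choose k : ℝ) * (p ^ k * q ^ (n-k) - p ^ k * (q - p) ^ (n-k)) / (1 - q ^ n) * μ k := by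
          intro k hk
          have := (ih k (Finset.mem_range.mp hk)).1
          have h0 := hdiff n k
          positivity
        constructor
        · rw [hμrec n h]
          have := Finset.sum_nonneg hterm
          linarith
        · rw [hμrec n h]
          have hle : ∑ k ∈ range n,
              (n.choose k : ℝ) * (p ^ k * q ^ (n-k) - p ^ k * (q - p) ^ (n-k)) / (1 - q ^ n) * μ k
              ≤ ∑ k ∈ range n,
              (n.choose k : ℝ) * (p ^ k * q ^ (n-k) - p ^ k * (q - p) ^ (n-k)) / (1 - q ^ n) * ((n:ℝ) - 1) := by
            apply Finset.sum_le_sum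
            intro k hk
            have hk' := Finset.mem_range.mp hk
            have h2 := (ih k hk').2
            have h3 : (k:ℝ) ≤ (n:ℝ) - 1 := by
              have : (k:ℝ) + 1 ≤ n := by exact_mod_cast hk'
              linarith
            have h4 : (0:ℝ) ≤ (n.choose k : ℝ) * (p ^ k * q ^ (n-k) - p ^ k * (q - p) ^ (n-k)) / (1 - q ^ n) := by
              have h0 := hdiff n k
              positivity
            exact mul_le_mul_of_nonneg_left (le_trans h2 h3) h4
          have heq : ∑ k ∈ range n,
              (n.choose k : ℝ) * (p ^ k * q ^ (n-k) - p ^ k * (q - p) ^ (n-k)) / (1 - q ^ n) * ((n:ℝ) - 1)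
              = (n:ℝ) - 1 := by
            rw [← Finset.sum_mul, ← Finset.sum_div, hws n h, div_self hqpos.ne', one_mul]
          rw [heq] at hle
          linarith
  have key : ∀ x : ℝ, Summable (fun n : ℕ => μ n * x ^ n / (n.factorial : ℝ)) := by
    intro x
    have hb : Summable (fun n : ℕ => (2 * |x|) ^ n / (n.factorial : ℝ)) :=
      Real.summable_pow_div_factorial _
    refine hb.of_norm_bounded ?_
    intro n
    have h1 : ‖μ n * x ^ n / (n.factorial : ℝ)‖ = μ n * |x| ^ n / (n.factorial : ℝ) := by
      rw [norm_div, norm_mul, norm_pow, Real.norm_eq_abs, Real.norm_eq_abs,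
        Real.norm_eq_abs, abs_of_nonneg (hμbd n).1, Nat.abs_cast]
    rw [h1, mul_pow]
    have h2 : (n:ℝ) ≤ 2 ^ n := by exact_mod_cast (Nat.lt_two_pow_self (n := n)).le
    have h4 : (0:ℝ) ≤ |x| ^ n := by positivity
    have h3 : μ n * |x| ^ n ≤ 2 ^ n * |x| ^ n := by nlinarith [(hμbd n).2]
    have h5 : (0:ℝ) < (n.factorial : ℝ) := by positivity
    exact div_le_div_of_nonneg_right h3 h5.le
  have hmain : ∀ z : ℝ, (∑' n : ℕ, μ n * z ^ n / (n.factorial : ℝ))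
      = (∑' n : ℕ, μ n * (q*z) ^ n / (n.factorial : ℝ)) + Real.exp z - Real.exp (q*z)
      + (Real.exp (q*z) - Real.exp ((q-p)*z)) * (∑' n : ℕ, μ n * (p*z) ^ n / (n.factorial : ℝ)) := by
    intro z
    set c : ℕ → ℕ → ℝ := fun n k => (n.choose k : ℝ) *
        (p ^ k * q ^ (n-k) - p ^ k * (q - p) ^ (n-k)) * μ k * z ^ n / (n.factorial : ℝ) with hc
    -- per-n identity
    have pern : ∀ n : ℕ, μ n * z ^ n / (n.factorial : ℝ) - μ n * (q*z) ^ n / (n.factorial : ℝ)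
        = (z ^ n / (n.factorial : ℝ) - (q*z) ^ n / (n.factorial : ℝ)) + ∑ k ∈ range n, c n k := by
      intro n
      rcases Nat.eq_zero_or_pos n with h | h
      · subst h; simp
      · have hqn : q ^ n < 1 := pow_lt_one₀ hq0.le hq1 (by omega)
        have hB : (1:ℝ) - q ^ n ≠ 0 := by linarith
        have hrw : ∀ k ∈ range n, c n k =
            ((n.choose k : ℝ) * (p ^ k * q ^ (n-k) - p ^ k * (q - p) ^ (n-k)) / (1 - q ^ n) * μ k)
            * ((1 - q ^ n) * (z ^ n / (n.factorial : ℝ))) := by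
          intro k _
          rw [hc]
          field_simp
        rw [Finset.sum_congr rfl hrw, ← Finset.sum_mul, hμrec n h, mul_pow]
        set S := ∑ k ∈ range n, (n.choose k : ℝ) *
          (p ^ k * q ^ (n-k) - p ^ k * (q - p) ^ (n-k)) / (1 - q ^ n) * μ k
        ring
    -- zero off the triangle
    have czero : ∀ n k : ℕ, n ≤ k → c n k = 0 := by
      intro n k hnk
      rcases eq_or_lt_of_le hnk with h | h
      · subst h
        simp [hc, Nat.sub_self]
      · simp [hc, Nat.choose_eq_zero_of_lt h]
    -- explicit diagonal value
    have hck : ∀ k m : ℕ, c (k+m) k = (μ k * (p*z) ^ k / (k.factorial : ℝ)) *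
        ((q*z) ^ m / (m.factorial : ℝ) - ((q-p)*z) ^ m / (m.factorial : ℝ)) := by
      intro k m
      have hfacn : ((k+m).choose k : ℝ) * (k.factorial : ℝ) * (m.factorial : ℝ)
          = ((k+m).factorial : ℝ) := by
        exact_mod_cast congrArg (Nat.cast (R := ℝ))
          (by simpa [Nat.add_sub_cancel_left] using
            Nat.choose_mul_factorial_mul_factorial (Nat.le_add_right k m))
      have hk0 : (k.factorial : ℝ) ≠ 0 := by positivity
      have hm0 : (m.factorial : ℝ) ≠ 0 := by positivity
      have hn0 : ((k+m).factorial : ℝ) ≠ 0 := by positivity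
      rw [hc]
      simp only [Nat.add_sub_cancel_left]
      field_simp
      rw [mul_pow, mul_pow, mul_pow, pow_add]
      linear_combination ((p ^ k * q ^ m - p ^ k * (q-p) ^ m) * μ k * (z ^ k * z ^ m)) * hfacn
    -- absolute value of c
    have habs : ∀ n k : ℕ, |c n k| = (n.choose k : ℝ) *
        (p ^ k * q ^ (n-k) - p ^ k * (q - p) ^ (n-k)) * μ k * |z| ^ n / (n.factorial : ℝ) := by
      intro n k
      rw [hc]
      rw [abs_div, abs_mul, abs_mul, abs_mul, abs_pow, Nat.abs_cast, Nat.abs_cast,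
        abs_of_nonneg (hdiff n k), abs_of_nonneg (hμbd k).1]
    have habs_le : ∀ n : ℕ, ∀ k ∈ range (n+1), |c n k| ≤
        ((n.choose k : ℝ) * (p ^ k * q ^ (n-k))) * ((n:ℝ) * |z| ^ n / (n.factorial : ℝ)) := by
      intro n k hk
      rw [habs]
      have h1 := hdiffle n k
      have h3 := (hμbd k).1
      have h4 := (hμbd k).2
      have h5 : (k:ℝ) ≤ (n:ℝ) := by exact_mod_cast Nat.lt_succ_iff.mp (mem_range.mp hk)
      have hA : (0:ℝ) ≤ (n.choose k : ℝ) * |z| ^ n / (n.factorial : ℝ) := by positivity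
      have hprod : (p ^ k * q ^ (n-k) - p ^ k * (q - p) ^ (n-k)) * μ k
          ≤ (p ^ k * q ^ (n-k)) * (n:ℝ) :=
        mul_le_mul h1 (h4.trans h5) h3 (by positivity)
      calc (n.choose k : ℝ) * (p ^ k * q ^ (n-k) - p ^ k * (q - p) ^ (n-k)) * μ k * |z| ^ n / (n.factorial : ℝ)
          = ((n.choose k : ℝ) * |z| ^ n / (n.factorial : ℝ)) * ((p ^ k * q ^ (n-k) - p ^ k * (q - p) ^ (n-k)) * μ k) := by ring
        _ ≤ ((n.choose k : ℝ) * |z| ^ n / (n.factorial : ℝ)) * ((p ^ k * q ^ (n-k)) * (n:ℝ)) :=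
            mul_le_mul_of_nonneg_left hprod hA
        _ = ((n.choose k : ℝ) * (p ^ k * q ^ (n-k))) * ((n:ℝ) * |z| ^ n / (n.factorial : ℝ)) := by ring
    -- rows summable
    have hcsum_row : ∀ n : ℕ, Summable (fun k => c n k) := fun n =>
      summable_of_ne_finset_zero (s := range (n+1))
        (fun k hk => czero n k (by simp only [mem_range] at hk; omega))
    have hrowsum_le : ∀ n : ℕ, ∑' k, |c n k| ≤ (2*|z|) ^ n / (n.factorial : ℝ) := by
      intro n
      rw [tsum_eq_sum (s := range (n+1))
        (fun k hk => by rw [czero n k (by simp only [mem_range] at hk; omega)]; exact abs_zero)]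
      have h2 : (n:ℝ) ≤ 2 ^ n := by exact_mod_cast (Nat.lt_two_pow_self (n := n)).le
      calc ∑ k ∈ range (n+1), |c n k|
          ≤ ∑ k ∈ range (n+1), ((n.choose k : ℝ) * (p ^ k * q ^ (n-k))) * ((n:ℝ) * |z| ^ n / (n.factorial : ℝ)) :=
            Finset.sum_le_sum (habs_le n)
        _ = (∑ k ∈ range (n+1), (n.choose k : ℝ) * (p ^ k * q ^ (n-k))) * ((n:ℝ) * |z| ^ n / (n.factorial : ℝ)) :=
            (Finset.sum_mul _ _ _).symm
        _ = (n:ℝ) * |z| ^ n / (n.factorial : ℝ) := by rw [hbin p q n, hpq1, one_pow, one_mul]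
        _ ≤ (2*|z|) ^ n / (n.factorial : ℝ) := by
            rw [mul_pow]
            have h4 : (0:ℝ) ≤ |z| ^ n := by positivity
            have h5 : (0:ℝ) < (n.factorial : ℝ) := by positivity
            apply div_le_div_of_nonneg_right _ h5.le
            nlinarith
    -- summability of the uncurried family
    have hC : Summable (Function.uncurry c) := by
      have : Function.uncurry c = fun x : ℕ × ℕ => c x.1 x.2 := rfl
      rw [this]
      rw [← summable_abs_iff]
      rw [summable_prod_of_nonneg (fun x => abs_nonneg _)]
      refine ⟨fun n => (hcsum_row n).abs, ?_⟩
      exact Summable.of_nonneg_of_le (fun n => tsum_nonneg fun k => abs_nonneg _)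
        hrowsum_le (Real.summable_pow_div_factorial _)
    -- columns summable and their sums
    have hcol : ∀ k : ℕ, Summable (fun n => c n k) := by
      intro k
      have hinj : Function.Injective (fun m : ℕ => k + m) := fun a b h => by simp only [] at h; omega
      have hsupp : ∀ x ∉ Set.range (fun m : ℕ => k + m), c x k = 0 := by
        intro x hx
        have : x < k := by
          by_contra h
          exact hx ⟨x - k, by show k + (x - k) = x; omega⟩
        exact czero x k (by omega)
      rw [← Function.Injective.summable_iff hinj hsupp]
      have : Summable (fun m : ℕ => (μ k * (p*z) ^ k / (k.factorial : ℝ)) *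
          ((q*z) ^ m / (m.factorial : ℝ) - ((q-p)*z) ^ m / (m.factorial : ℝ))) :=
        Summable.mul_left _ ((Real.summable_pow_div_factorial (q*z)).sub
          (Real.summable_pow_div_factorial ((q-p)*z)))
      exact this.congr fun m => (hck k m).symm
    have hcolsum : ∀ k : ℕ, ∑' n, c n k =
        (Real.exp (q*z) - Real.exp ((q-p)*z)) * (μ k * (p*z) ^ k / (k.factorial : ℝ)) := by
      intro k
      have hinj : Function.Injective (fun m : ℕ => k + m) := fun a b h => by simp only [] at h; omega
      have hsupp : Function.support (fun n => c n k) ⊆ Set.range (fun m : ℕ => k + m) := by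
        intro x hx
        by_contra h
        have : x < k := by
          by_contra h2
          exact h ⟨x - k, by show k + (x - k) = x; omega⟩
        exact hx (czero x k (by omega))
      calc ∑' n, c n k = ∑' m, c (k+m) k := (Function.Injective.tsum_eq hinj hsupp).symm
        _ = ∑' m, (μ k * (p*z) ^ k / (k.factorial : ℝ)) *
              ((q*z) ^ m / (m.factorial : ℝ) - ((q-p)*z) ^ m / (m.factorial : ℝ)) :=
            tsum_congr (hck k)
        _ = (μ k * (p*z) ^ k / (k.factorial : ℝ)) *
              ((∑' m : ℕ, (q*z) ^ m / (m.factorial : ℝ)) - ∑' m : ℕ, ((q-p)*z) ^ m / (m.factorial : ℝ)) := by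
            rw [tsum_mul_left, Summable.tsum_sub (Real.summable_pow_div_factorial (q*z))
              (Real.summable_pow_div_factorial ((q-p)*z))]
        _ = (Real.exp (q*z) - Real.exp ((q-p)*z)) * (μ k * (p*z) ^ k / (k.factorial : ℝ)) := by
            rw [← expeq, ← expeq]; ring
    -- assemble
    have Sa := key z
    have Sb := key (q*z)
    have Se : Summable (fun n : ℕ => z ^ n / (n.factorial : ℝ) - (q*z) ^ n / (n.factorial : ℝ)) :=
      (Real.summable_pow_div_factorial z).sub (Real.summable_pow_div_factorial (q*z))
    have Ssum : Summable (fun n => ∑ k ∈ range n, c n k) := by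
      have heq : (fun n => ∑ k ∈ range n, c n k) = fun n =>
          (μ n * z ^ n / (n.factorial : ℝ) - μ n * (q*z) ^ n / (n.factorial : ℝ))
          - (z ^ n / (n.factorial : ℝ) - (q*z) ^ n / (n.factorial : ℝ)) := by
        funext n
        rw [pern n]; ring
      rw [heq]
      exact (Sa.sub Sb).sub Se
    have hrows_eq : ∀ n, ∑ k ∈ range n, c n k = ∑' k, c n k := fun n =>
      (tsum_eq_sum (s := range n) (fun k hk => czero n k (by simp only [mem_range] at hk; omega))).symm
    have hfub : ∑' n, ∑' k, c n k = ∑' k, ∑' n, c n k :=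
      (Summable.tsum_comm' hC hcsum_row hcol).symm
    have hRHSsum : ∑' n, (∑ k ∈ range n, c n k) =
        (Real.exp (q*z) - Real.exp ((q-p)*z)) * ∑' k : ℕ, μ k * (p*z) ^ k / (k.factorial : ℝ) := by
      calc ∑' n, (∑ k ∈ range n, c n k) = ∑' n, ∑' k, c n k := tsum_congr hrows_eq
        _ = ∑' k, ∑' n, c n k := hfub
        _ = ∑' k : ℕ, (Real.exp (q*z) - Real.exp ((q-p)*z)) * (μ k * (p*z) ^ k / (k.factorial : ℝ)) :=
            tsum_congr hcolsum
        _ = (Real.exp (q*z) - Real.exp ((q-p)*z)) * ∑' k : ℕ, μ k * (p*z) ^ k / (k.factorial : ℝ) :=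
            tsum_mul_left
    have hmain : ∑' n, (μ n * z ^ n / (n.factorial : ℝ) - μ n * (q*z) ^ n / (n.factorial : ℝ))
        = ∑' n, ((z ^ n / (n.factorial : ℝ) - (q*z) ^ n / (n.factorial : ℝ)) + ∑ k ∈ range n, c n k) :=
      tsum_congr pern
    rw [Summable.tsum_sub Sa Sb, Summable.tsum_add Se Ssum, Summable.tsum_sub (Real.summable_pow_div_factorial z)
      (Real.summable_pow_div_factorial (q*z)), ← expeq, ← expeq, hRHSsum] at hmain
    linarith

  constructor
  · rw [hf1 0]
    have : (∑' n : ℕ, μ n * (0:ℝ) ^ n / (n.factorial : ℝ)) = 0 := by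
      rw [tsum_eq_single 0 (by intro n hn; simp [zero_pow hn])]
      simp [hμ0]
    simp [this]
  · intro z
    rw [hf1 z, hf1 (p*z), hf1 (q*z), hmain z]
    have e1 : Real.exp (-z) = Real.exp (-(p*z)) * Real.exp (-(q*z)) := by
      rw [← Real.exp_add]; congr 1; rw [hq]; ring
    have e2 : Real.exp (-z) * Real.exp z = 1 := by
      rw [← Real.exp_add]; simp
    have e5 : Real.exp (-z) * Real.exp (q*z) = Real.exp (-(p*z)) := by
      rw [← Real.exp_add]; congr 1; rw [hq]; ring
    have e4 : Real.exp (-z) * Real.exp ((q-p)*z) = Real.exp (-(p*z)) * Real.exp (-(p*z)) := by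
      rw [← Real.exp_add, ← Real.exp_add]; congr 1; rw [hq]; ring
    linear_combination (∑' n : ℕ, μ n * (q*z) ^ n / (n.factorial : ℝ)) * e1 + e2
      + ((∑' n : ℕ, μ n * (p*z) ^ n / (n.factorial : ℝ)) - 1) * e5
      - (∑' n : ℕ, μ n * (p*z) ^ n / (n.factorial : ℝ)) * e4
end

section
/- Let f̃_1 and f̃_2 be the Poisson generating functions of the first and second moments of X_n, satisfying f̃_1(z) = (1−e^{-pz})f̃_1(pz) + e^{-pz}f̃_1(qz) + 1 − e^{-pz} and f̃_2(z) = (1−e^{-pz})f̃_2(pz) + e^{-pz}f̃_2(qz) + 2(1−e^{-pz})f̃_1(pz) + 1 − e^{-pz}. Then Ṽ(z) := f̃_2(z) − f̃_1(z)^2 satisfies Ṽ(z) = (1−e^{-pz})Ṽ(pz) + e^{-pz}Ṽ(qz) + e^{-pz}(1−e^{-pz})(1 + f̃_1(pz) − f̃_1(qz))^2, with Ṽ(0) = 0. -/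
/-- The Poissonized variance `Ṽ(z) := f̃₂(z) − f̃₁(z)²` satisfies
`Ṽ(z) = (1−e^{-pz})Ṽ(pz) + e^{-pz}Ṽ(qz) + e^{-pz}(1−e^{-pz})(1 + f̃₁(pz) − f̃₁(qz))²`,
with `Ṽ(0) = 0`, as an algebraic consequence of the functional equations of `f̃₁, f̃₂`. -/
theorem stmt_8 (p q : ℝ) (hp : 0 < p) (hpq : p ≤ q) (hq : q = 1 - p)
    (f1 f2 : ℝ → ℝ) (hf10 : f1 0 = 0) (hf20 : f2 0 = 0)
    (hf1 : ∀ z : ℝ, f1 z = (1 - Real.exp (-(p * z))) * f1 (p * z)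
      + Real.exp (-(p * z)) * f1 (q * z) + 1 - Real.exp (-(p * z)))
    (hf2 : ∀ z : ℝ, f2 z = (1 - Real.exp (-(p * z))) * f2 (p * z)
      + Real.exp (-(p * z)) * f2 (q * z)
      + 2 * (1 - Real.exp (-(p * z))) * f1 (p * z) + 1 - Real.exp (-(p * z)))
    (V : ℝ → ℝ) (hV : ∀ z, V z = f2 z - (f1 z) ^ 2) :
    V 0 = 0 ∧ ∀ z : ℝ, V z = (1 - Real.exp (-(p * z))) * V (p * z)
      + Real.exp (-(p * z)) * V (q * z)
      + Real.exp (-(p * z)) * (1 - Real.exp (-(p * z)))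
        * (1 + f1 (p * z) - f1 (q * z)) ^ 2 := by
  constructor
  · simp [hV, hf10, hf20]
  · intro z
    rw [hV z, hV (p*z), hV (q*z), hf1 z, hf2 z]
    ring
end

section
/- Let Ã_k(z) := e^{-z} ∑_{n≥0} P(X_n = k) z^n/n!. Then Ã_0(z) = e^{-z}, and for k ≥ 0, Ã_{k+1}(z) = (1 − e^{-pz}) Ã_k(pz) + e^{-pz} Ã_{k+1}(qz). -/
lemma my_exp_tsum (x : ℝ) : Real.exp x = ∑' n : ℕ, x ^ n / (n.factorial : ℝ) := by
  rw [Real.exp_eq_exp_ℝ, NormedSpace.exp_eq_tsum_div]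

lemma my_summable_norm (f : ℕ → ℝ) (hf : ∀ n, |f n| ≤ 1) (z : ℝ) :
    Summable (fun n : ℕ => ‖f n * z ^ n / (n.factorial : ℝ)‖) := by
  apply Summable.of_nonneg_of_le (fun n => norm_nonneg _) _
    (Real.summable_pow_div_factorial |z|)
  intro n
  rw [Real.norm_eq_abs, abs_div, abs_mul, abs_pow, Nat.abs_cast]
  calc |f n| * |z| ^ n / (n.factorial : ℝ)
      ≤ 1 * |z| ^ n / (n.factorial : ℝ) := by gcongr; exact hf n
    _ = |z| ^ n / (n.factorial : ℝ) := by rw [one_mul]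

lemma my_summable (f : ℕ → ℝ) (hf : ∀ n, |f n| ≤ 1) (z : ℝ) :
    Summable (fun n : ℕ => f n * z ^ n / (n.factorial : ℝ)) :=
  Summable.of_norm (my_summable_norm f hf z)

lemma my_egf_mul (c z : ℝ) (f : ℕ → ℝ) (hf : ∀ n, |f n| ≤ 1) :
    Real.exp (c * z) * ∑' j : ℕ, f j * z ^ j / (j.factorial : ℝ)
      = ∑' n : ℕ, (∑ j ∈ Finset.range (n + 1),
          (n.choose j : ℝ) * c ^ (n - j) * f j) * z ^ n / (n.factorial : ℝ) := by
  rw [my_exp_tsum]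
  have h1 : Summable fun i : ℕ => ‖(c * z) ^ i / (i.factorial : ℝ)‖ := by
    refine (Real.summable_pow_div_factorial |c * z|).congr fun i => ?_
    rw [Real.norm_eq_abs, abs_div, abs_pow, Nat.abs_cast]
  have h2 := my_summable_norm f hf z
  rw [tsum_mul_tsum_eq_tsum_sum_antidiagonal_of_summable_norm h1 h2]
  refine tsum_congr fun n => ?_
  conv_rhs => rw [← Finset.sum_range_reflect, Finset.sum_mul, Finset.sum_div]
  rw [Finset.Nat.sum_antidiagonal_eq_sum_range_succ_mk]
  refine Finset.sum_congr rfl fun i hi => ?_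
  have hi' : i ≤ n := by
    have := Finset.mem_range.mp hi; omega
  have h3 : n + 1 - 1 - i = n - i := by omega
  simp only [h3]
  rw [Nat.choose_symm hi', Nat.sub_sub_self hi']
  have key : ((n.choose i : ℕ) : ℝ) * (i.factorial : ℝ) * ((n - i).factorial : ℝ)
      = (n.factorial : ℝ) := by
    exact_mod_cast Nat.choose_mul_factorial_mul_factorial hi'
  have hz : z ^ i * z ^ (n - i) = z ^ n := by
    rw [← pow_add, Nat.add_sub_cancel' hi']
  have hnf : (n.factorial : ℝ) ≠ 0 := Nat.cast_ne_zero.mpr n.factorial_ne_zero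
  rw [mul_pow, div_mul_div_comm, div_eq_div_iff (by positivity) hnf]
  linear_combination (-(c ^ i * f (n - i) * z ^ i * z ^ (n - i))) * key +
    ((n.choose i : ℝ) * c ^ i * f (n - i) * (i.factorial : ℝ) * ((n - i).factorial : ℝ)) * hz

lemma my_binom_sum (x y : ℝ) (n : ℕ) :
    ∑ j ∈ Finset.range (n + 1), (n.choose j : ℝ) * y ^ (n - j) * x ^ j = (x + y) ^ n := by
  rw [add_pow]
  exact Finset.sum_congr rfl fun j _ => by ring

lemma my_bounds (p q : ℝ) (hp : 0 < p) (hpq : p ≤ q) (hq : q = 1 - p)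
    (a : ℕ → ℕ → ℝ) (ha00 : a 0 0 = 1) (ha0 : ∀ k, a 0 (k + 1) = 0)
    (han0 : ∀ n, 1 ≤ n → a n 0 = 0)
    (harec : ∀ n, 1 ≤ n → ∀ k, a n (k + 1) =
      ∑ j ∈ Finset.range n, (n.choose j : ℝ) *
        (p ^ j * q ^ (n - j) - p ^ j * (q - p) ^ (n - j)) / (1 - q ^ n) * a j k) :
    ∀ k n, 0 ≤ a n k ∧ a n k ≤ 1 := by
  have hq0 : 0 < q := lt_of_lt_of_le hp hpq
  have hq1 : q < 1 := by rw [hq]; linarith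
  have hqp : (0 : ℝ) ≤ q - p := by linarith
  have hpq1 : p + q = 1 := by rw [hq]; ring
  intro k
  induction k with
  | zero =>
    intro n
    obtain rfl | hn := Nat.eq_zero_or_pos n
    · simp [ha00]
    · rw [han0 n hn]; norm_num
  | succ k ih =>
    intro n
    obtain rfl | hn := Nat.eq_zero_or_pos n
    · rw [ha0]; norm_num
    · have hden : 0 < 1 - q ^ n := by
        have : q ^ n < 1 := pow_lt_one₀ hq0.le hq1 (by omega)
        linarith
      have hwnn : ∀ j ∈ Finset.range n, 0 ≤ (n.choose j : ℝ) *
          (p ^ j * q ^ (n - j) - p ^ j * (q - p) ^ (n - j)) / (1 - q ^ n) := by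
        intro j _
        apply div_nonneg _ hden.le
        apply mul_nonneg (Nat.cast_nonneg _)
        have h1 : (q - p) ^ (n - j) ≤ q ^ (n - j) := pow_le_pow_left₀ hqp (by linarith) _
        have hpj : (0 : ℝ) ≤ p ^ j := by positivity
        nlinarith
      have hwsum : ∑ j ∈ Finset.range n, (n.choose j : ℝ) *
          (p ^ j * q ^ (n - j) - p ^ j * (q - p) ^ (n - j)) / (1 - q ^ n) = 1 := by
        rw [← Finset.sum_div, div_eq_one_iff_eq hden.ne']
        have hstep : ∑ j ∈ Finset.range (n + 1), (n.choose j : ℝ) *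
            (p ^ j * q ^ (n - j) - p ^ j * (q - p) ^ (n - j))
            = ∑ j ∈ Finset.range n, (n.choose j : ℝ) *
            (p ^ j * q ^ (n - j) - p ^ j * (q - p) ^ (n - j)) := by
          rw [Finset.sum_range_succ, Nat.sub_self, pow_zero, pow_zero]
          simp
        rw [← hstep]
        have e1 : ∑ j ∈ Finset.range (n + 1), (n.choose j : ℝ) *
            (p ^ j * q ^ (n - j) - p ^ j * (q - p) ^ (n - j))
            = (∑ j ∈ Finset.range (n + 1), (n.choose j : ℝ) * q ^ (n - j) * p ^ j)
              - ∑ j ∈ Finset.range (n + 1), (n.choose j : ℝ) * (q - p) ^ (n - j) * p ^ j := by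
          rw [← Finset.sum_sub_distrib]
          exact Finset.sum_congr rfl fun j _ => by ring
        rw [e1, my_binom_sum, my_binom_sum, hpq1, one_pow]
        ring_nf
      rw [harec n hn k]
      constructor
      · exact Finset.sum_nonneg fun j hj => mul_nonneg (hwnn j hj) (ih j).1
      · calc ∑ j ∈ Finset.range n, (n.choose j : ℝ) *
              (p ^ j * q ^ (n - j) - p ^ j * (q - p) ^ (n - j)) / (1 - q ^ n) * a j k
            ≤ ∑ j ∈ Finset.range n, (n.choose j : ℝ) *
              (p ^ j * q ^ (n - j) - p ^ j * (q - p) ^ (n - j)) / (1 - q ^ n) := by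
              refine Finset.sum_le_sum fun j hj => ?_
              exact mul_le_of_le_one_right (hwnn j hj) (ih j).2
          _ = 1 := hwsum

/-- With `Ã_k(z) := e^{-z} ∑_{n≥0} P(X_n = k) z^n/n!` for the binomial splitting
process, one has `Ã_0(z) = e^{-z}` and
`Ã_{k+1}(z) = (1 − e^{-pz}) Ã_k(pz) + e^{-pz} Ã_{k+1}(qz)`.
Here `a n k = P(X_n = k)`, determined by the distributional recurrence. -/
theorem stmt_10 (p q : ℝ) (hp : 0 < p) (hpq : p ≤ q) (hq : q = 1 - p)
    (a : ℕ → ℕ → ℝ) (ha00 : a 0 0 = 1) (ha0 : ∀ k, a 0 (k + 1) = 0)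
    (han0 : ∀ n, 1 ≤ n → a n 0 = 0)
    (harec : ∀ n, 1 ≤ n → ∀ k, a n (k + 1) =
      ∑ j ∈ Finset.range n, (n.choose j : ℝ) *
        (p ^ j * q ^ (n - j) - p ^ j * (q - p) ^ (n - j)) / (1 - q ^ n) * a j k)
    (A : ℕ → ℝ → ℝ)
    (hA : ∀ k z, A k z = Real.exp (-z) * ∑' n : ℕ, a n k * z ^ n / (n.factorial : ℝ)) :
    (∀ z : ℝ, A 0 z = Real.exp (-z)) ∧
    (∀ k : ℕ, ∀ z : ℝ, A (k + 1) z = (1 - Real.exp (-(p * z))) * A k (p * z)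
      + Real.exp (-(p * z)) * A (k + 1) (q * z)) := by
  have hq0 : 0 < q := lt_of_lt_of_le hp hpq
  have hq1 : q < 1 := by rw [hq]; linarith
  have hqp : (0 : ℝ) ≤ q - p := by linarith
  have hpq1 : p + q = 1 := by rw [hq]; ring
  have hp1 : p ≤ 1 := by linarith
  have hb := my_bounds p q hp hpq hq a ha00 ha0 han0 harec
  constructor
  · intro z
    rw [hA]
    have h1 : (∑' n : ℕ, a n 0 * z ^ n / (n.factorial : ℝ)) = 1 := by
      rw [tsum_eq_single 0]
      · simp [ha00]
      · intro n hn
        rw [han0 n (Nat.one_le_iff_ne_zero.mpr hn)]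
        ring
    rw [h1, mul_one]
  · intro k z
    -- bounded sequences
    have hfb : ∀ j : ℕ, |p ^ j * a j k| ≤ 1 := by
      intro j
      rw [abs_le]
      constructor
      · have : 0 ≤ p ^ j * a j k := mul_nonneg (by positivity) (hb k j).1
        linarith
      · calc p ^ j * a j k ≤ p ^ j * 1 :=
              mul_le_mul_of_nonneg_left (hb k j).2 (by positivity)
          _ ≤ 1 := by rw [mul_one]; exact pow_le_one₀ hp.le hp1
    have hub : ∀ n : ℕ, |∑ j ∈ Finset.range (n + 1),
        (n.choose j : ℝ) * q ^ (n - j) * (p ^ j * a j k)| ≤ 1 := by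
      intro n
      rw [abs_le]
      have hnn : (0:ℝ) ≤ ∑ j ∈ Finset.range (n + 1),
          (n.choose j : ℝ) * q ^ (n - j) * (p ^ j * a j k) :=
        Finset.sum_nonneg fun j _ => by
          have := (hb k j).1
          positivity
      refine ⟨by linarith, ?_⟩
      calc ∑ j ∈ Finset.range (n + 1), (n.choose j : ℝ) * q ^ (n - j) * (p ^ j * a j k)
          ≤ ∑ j ∈ Finset.range (n + 1), (n.choose j : ℝ) * q ^ (n - j) * p ^ j := by
            refine Finset.sum_le_sum fun j _ => ?_
            have h1 : (0:ℝ) ≤ (n.choose j : ℝ) * q ^ (n - j) * p ^ j := by positivity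
            nlinarith [mul_nonneg h1 (sub_nonneg.mpr (hb k j).2)]
        _ = (p + q) ^ n := my_binom_sum p q n
        _ = 1 := by rw [hpq1, one_pow]
    have hvb : ∀ n : ℕ, |∑ j ∈ Finset.range (n + 1),
        (n.choose j : ℝ) * (q - p) ^ (n - j) * (p ^ j * a j k)| ≤ 1 := by
      intro n
      rw [abs_le]
      have hnn : (0:ℝ) ≤ ∑ j ∈ Finset.range (n + 1),
          (n.choose j : ℝ) * (q - p) ^ (n - j) * (p ^ j * a j k) :=
        Finset.sum_nonneg fun j _ => by
          have := (hb k j).1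
          positivity
      refine ⟨by linarith, ?_⟩
      calc ∑ j ∈ Finset.range (n + 1), (n.choose j : ℝ) * (q - p) ^ (n - j) * (p ^ j * a j k)
          ≤ ∑ j ∈ Finset.range (n + 1), (n.choose j : ℝ) * (q - p) ^ (n - j) * p ^ j := by
            refine Finset.sum_le_sum fun j _ => ?_
            have h1 : (0:ℝ) ≤ (n.choose j : ℝ) * (q - p) ^ (n - j) * p ^ j := by positivity
            nlinarith [mul_nonneg h1 (sub_nonneg.mpr (hb k j).2)]
        _ = (p + (q - p)) ^ n := my_binom_sum p (q - p) n
        _ ≤ 1 := by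
            have : p + (q - p) = q := by ring
            rw [this]
            exact pow_le_one₀ hq0.le hq1.le
    have hhb : ∀ n : ℕ, |q ^ n * a n (k + 1)| ≤ 1 := by
      intro n
      rw [abs_le]
      constructor
      · have : 0 ≤ q ^ n * a n (k + 1) := mul_nonneg (by positivity) (hb (k + 1) n).1
        linarith
      · calc q ^ n * a n (k + 1) ≤ q ^ n * 1 :=
              mul_le_mul_of_nonneg_left (hb (k + 1) n).2 (by positivity)
          _ ≤ 1 := by rw [mul_one]; exact pow_le_one₀ hq0.le hq1.le
    have Su := my_summable _ hub z
    have Sv := my_summable _ hvb z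
    have Sh := my_summable _ hhb z
    -- termwise recurrence identity
    have hterm : ∀ n : ℕ, a n (k + 1)
        = ((∑ j ∈ Finset.range (n + 1), (n.choose j : ℝ) * q ^ (n - j) * (p ^ j * a j k))
           - ∑ j ∈ Finset.range (n + 1), (n.choose j : ℝ) * (q - p) ^ (n - j) * (p ^ j * a j k))
          + q ^ n * a n (k + 1) := by
      intro n
      obtain rfl | hn := Nat.eq_zero_or_pos n
      · simp [ha0]
      · have hden : 0 < 1 - q ^ n := by
          have : q ^ n < 1 := pow_lt_one₀ hq0.le hq1 (by omega)
          linarith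
        have hstep : (∑ j ∈ Finset.range (n + 1), (n.choose j : ℝ) * q ^ (n - j) * (p ^ j * a j k))
            - ∑ j ∈ Finset.range (n + 1), (n.choose j : ℝ) * (q - p) ^ (n - j) * (p ^ j * a j k)
            = ∑ j ∈ Finset.range n, (n.choose j : ℝ) *
                (q ^ (n - j) - (q - p) ^ (n - j)) * (p ^ j * a j k) := by
          rw [← Finset.sum_sub_distrib, Finset.sum_range_succ, Nat.sub_self, pow_zero, pow_zero]
          rw [show ((n.choose n : ℝ) * 1 * (p ^ n * a n k)
              - (n.choose n : ℝ) * 1 * (p ^ n * a n k)) = 0 from sub_self _, add_zero]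
          exact Finset.sum_congr rfl fun j _ => by ring
        have hrec : (1 - q ^ n) * a n (k + 1)
            = ∑ j ∈ Finset.range n, (n.choose j : ℝ) *
                (q ^ (n - j) - (q - p) ^ (n - j)) * (p ^ j * a j k) := by
          rw [harec n hn k, Finset.mul_sum]
          refine Finset.sum_congr rfl fun j _ => ?_
          field_simp
        rw [hstep, ← hrec]
        ring
    -- the key generating function identity
    have hTg : (∑' j : ℕ, a j k * (p * z) ^ j / (j.factorial : ℝ))
        = ∑' j : ℕ, (p ^ j * a j k) * z ^ j / (j.factorial : ℝ) :=
      tsum_congr fun j => by rw [mul_pow]; ring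
    have hTh : (∑' n : ℕ, a n (k + 1) * (q * z) ^ n / (n.factorial : ℝ))
        = ∑' n : ℕ, (q ^ n * a n (k + 1)) * z ^ n / (n.factorial : ℝ) :=
      tsum_congr fun n => by rw [mul_pow]; ring
    have E1 : Real.exp (q * z) * (∑' j : ℕ, (p ^ j * a j k) * z ^ j / (j.factorial : ℝ))
        = ∑' n : ℕ, (∑ j ∈ Finset.range (n + 1),
            (n.choose j : ℝ) * q ^ (n - j) * (p ^ j * a j k)) * z ^ n / (n.factorial : ℝ) :=
      my_egf_mul q z (fun j => p ^ j * a j k) hfb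
    have E2 : Real.exp ((q - p) * z) * (∑' j : ℕ, (p ^ j * a j k) * z ^ j / (j.factorial : ℝ))
        = ∑' n : ℕ, (∑ j ∈ Finset.range (n + 1),
            (n.choose j : ℝ) * (q - p) ^ (n - j) * (p ^ j * a j k)) * z ^ n / (n.factorial : ℝ) :=
      my_egf_mul (q - p) z (fun j => p ^ j * a j k) hfb
    have Suv : Summable (fun n : ℕ =>
        ((∑ j ∈ Finset.range (n + 1), (n.choose j : ℝ) * q ^ (n - j) * (p ^ j * a j k))
         - ∑ j ∈ Finset.range (n + 1), (n.choose j : ℝ) * (q - p) ^ (n - j) * (p ^ j * a j k))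
        * z ^ n / (n.factorial : ℝ)) :=
      (Su.sub Sv).congr fun n => by ring
    have key : (∑' n : ℕ, a n (k + 1) * z ^ n / (n.factorial : ℝ))
        = (Real.exp (q * z) - Real.exp ((q - p) * z))
            * (∑' j : ℕ, a j k * (p * z) ^ j / (j.factorial : ℝ))
          + ∑' n : ℕ, a n (k + 1) * (q * z) ^ n / (n.factorial : ℝ) := by
      rw [hTg, hTh]
      calc (∑' n : ℕ, a n (k + 1) * z ^ n / (n.factorial : ℝ))
          = ∑' n : ℕ,
            (((∑ j ∈ Finset.range (n + 1), (n.choose j : ℝ) * q ^ (n - j) * (p ^ j * a j k))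
             - ∑ j ∈ Finset.range (n + 1), (n.choose j : ℝ) * (q - p) ^ (n - j) * (p ^ j * a j k))
              * z ^ n / (n.factorial : ℝ)
             + (q ^ n * a n (k + 1)) * z ^ n / (n.factorial : ℝ)) := by
            refine tsum_congr fun n => ?_
            nth_rewrite 1 [hterm n]
            ring
        _ = (∑' n : ℕ,
            ((∑ j ∈ Finset.range (n + 1), (n.choose j : ℝ) * q ^ (n - j) * (p ^ j * a j k))
             - ∑ j ∈ Finset.range (n + 1), (n.choose j : ℝ) * (q - p) ^ (n - j) * (p ^ j * a j k))
              * z ^ n / (n.factorial : ℝ))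
            + ∑' n : ℕ, (q ^ n * a n (k + 1)) * z ^ n / (n.factorial : ℝ) :=
            Summable.tsum_add Suv Sh
        _ = ((∑' n : ℕ, (∑ j ∈ Finset.range (n + 1),
              (n.choose j : ℝ) * q ^ (n - j) * (p ^ j * a j k)) * z ^ n / (n.factorial : ℝ))
            - ∑' n : ℕ, (∑ j ∈ Finset.range (n + 1),
              (n.choose j : ℝ) * (q - p) ^ (n - j) * (p ^ j * a j k)) * z ^ n / (n.factorial : ℝ))
            + ∑' n : ℕ, (q ^ n * a n (k + 1)) * z ^ n / (n.factorial : ℝ) := by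
            rw [← Summable.tsum_sub Su Sv]
            congr 1
            exact tsum_congr fun n => by ring
        _ = (Real.exp (q * z) - Real.exp ((q - p) * z))
              * (∑' j : ℕ, (p ^ j * a j k) * z ^ j / (j.factorial : ℝ))
            + ∑' n : ℕ, (q ^ n * a n (k + 1)) * z ^ n / (n.factorial : ℝ) := by
            rw [← E1, ← E2]
            ring
    rw [hA (k + 1) z, hA k (p * z), hA (k + 1) (q * z), key]
    have ee1 : Real.exp (-z) * Real.exp (q * z) = Real.exp (-(p * z)) := by
      rw [← Real.exp_add]
      congr 1
      rw [hq]; ring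
    have ee2 : Real.exp (-z) * Real.exp ((q - p) * z)
        = Real.exp (-(p * z)) * Real.exp (-(p * z)) := by
      rw [← Real.exp_add, ← Real.exp_add]
      congr 1
      rw [hq]; ring
    have ee3 : Real.exp (-z) = Real.exp (-(p * z)) * Real.exp (-(q * z)) := by
      rw [← Real.exp_add]
      congr 1
      rw [hq]; ring
    linear_combination (∑' j : ℕ, a j k * (p * z) ^ j / (j.factorial : ℝ)) * ee1
      - (∑' j : ℕ, a j k * (p * z) ^ j / (j.factorial : ℝ)) * ee2
      + (∑' n : ℕ, a n (k + 1) * (q * z) ^ n / (n.factorial : ℝ)) * ee3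
end

section
/- Suppose entire functions Ã_{k+1} and Ã_k satisfy Ã_{k+1}(z) = (1 − e^{-pz}) Ã_k(pz) + e^{-pz} Ã_{k+1}(qz) with Ã_{k+1}(0) = 0, and Ã_k is bounded on [0,∞). Then for all z with Re(z) > 0, Ã_{k+1}(z) = ∑_{j≥0} e^{-(1−q^j)z} (1 − e^{-p q^j z}) Ã_k(p q^j z), the series converging absolutely. -/
open Complex

lemma exp_sub_one_norm_le (w : ℂ) : ‖Complex.exp w - 1‖ ≤ ‖w‖ * Real.exp ‖w‖ := by
  have h := (convex_closedBall (0:ℂ) ‖w‖).norm_image_sub_le_of_norm_deriv_le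
    (f := Complex.exp) (C := Real.exp ‖w‖) (x := 0) (y := w)
    (fun x _ => Complex.differentiable_exp x)
    (fun x hx => by
      rw [Complex.deriv_exp, Complex.norm_exp]
      refine Real.exp_le_exp.2 ?_
      calc x.re ≤ |x.re| := le_abs_self _
        _ ≤ ‖x‖ := Complex.abs_re_le_norm x
        _ = ‖x‖ := rfl
        _ ≤ ‖w‖ := mem_closedBall_zero_iff.1 hx)
    (Metric.mem_closedBall_self (norm_nonneg w)) (mem_closedBall_zero_iff.2 le_rfl)
  simpa [Complex.exp_zero, mul_comm] using h

/-- Iterating the functional equation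
`Ã_{k+1}(z) = (1 − e^{-pz}) Ã_k(pz) + e^{-pz} Ã_{k+1}(qz)` (with `Ã_{k+1}(0) = 0`
and `Ã_k` bounded on `[0,∞)`) yields, for `Re(z) > 0`,
`Ã_{k+1}(z) = ∑_{j≥0} e^{-(1−q^j)z} (1 − e^{-p q^j z}) Ã_k(p q^j z)`,
the series converging absolutely. -/
theorem stmt_11 (p q : ℝ) (hp : 0 < p) (hp1 : p < 1) (hq : q = 1 - p)
    (Ak Ak1 : ℂ → ℂ) (hAk : Differentiable ℂ Ak) (hAk1 : Differentiable ℂ Ak1)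
    (hAk10 : Ak1 0 = 0)
    (hbdd : ∃ C : ℝ, ∀ x : ℝ, 0 ≤ x → ‖Ak (x : ℂ)‖ ≤ C)
    (hrec : ∀ z : ℂ, Ak1 z = (1 - Complex.exp (-(p * z))) * Ak (p * z)
      + Complex.exp (-(p * z)) * Ak1 (q * z)) :
    ∀ z : ℂ, 0 < z.re →
      Summable (fun j : ℕ => ‖Complex.exp (-((1 - (q : ℂ) ^ j) * z))
        * (1 - Complex.exp (-(p * q ^ j * z))) * Ak (p * q ^ j * z)‖) ∧
      Ak1 z = ∑' j : ℕ, Complex.exp (-((1 - (q : ℂ) ^ j) * z))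
        * (1 - Complex.exp (-(p * q ^ j * z))) * Ak (p * q ^ j * z) := by
  intro z hz
  have hq0 : 0 < q := by rw [hq]; linarith
  have hq1 : q < 1 := by rw [hq]; linarith
  set T : ℕ → ℂ := fun j => Complex.exp (-((1 - (q : ℂ) ^ j) * z))
        * (1 - Complex.exp (-(p * q ^ j * z))) * Ak (p * q ^ j * z) with hT
  -- bound on Ak on the segment {t z : t ∈ [0,1]}
  obtain ⟨M, hM⟩ : ∃ M : ℝ, ∀ t ∈ Set.Icc (0:ℝ) 1, ‖Ak ((t : ℂ) * z)‖ ≤ M := by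
    obtain ⟨M, hM⟩ := (isCompact_Icc (a := (0:ℝ)) (b := 1)).exists_bound_of_continuousOn
      (f := fun t : ℝ => Ak ((t : ℂ) * z))
      (hAk.continuous.comp (Complex.continuous_ofReal.mul continuous_const)).continuousOn
    exact ⟨M, hM⟩
  have hM0 : 0 ≤ M := le_trans (norm_nonneg _) (hM 0 ⟨le_rfl, zero_le_one⟩)
  -- norm bound on T
  have hbound : ∀ j : ℕ, ‖T j‖ ≤ M * (p * ‖z‖ * Real.exp (p * ‖z‖)) * q ^ j := by
    intro j
    have hqj0 : 0 < q ^ j := pow_pos hq0 j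
    have hqj1 : q ^ j ≤ 1 := pow_le_one₀ hq0.le hq1.le
    have e1 : ‖Complex.exp (-((1 - (q : ℂ) ^ j) * z))‖ ≤ 1 := by
      rw [Complex.norm_exp]
      have hre : (-((1 - (q : ℂ) ^ j) * z)).re = -((1 - q ^ j) * z.re) := by
        simp [← Complex.ofReal_pow, Complex.mul_re]
      rw [hre]
      have h0 : 0 ≤ (1 - q ^ j) * z.re := mul_nonneg (by linarith) hz.le
      exact Real.exp_le_one_iff.mpr (by linarith)
    have e2 : ‖(1 - Complex.exp (-(p * (q:ℂ) ^ j * z)))‖ ≤ p * ‖z‖ * Real.exp (p * ‖z‖) * q ^ j := by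
      have h := exp_sub_one_norm_le (-((p:ℂ) * (q:ℂ) ^ j * z))
      have hn : ‖(-((p:ℂ) * (q:ℂ) ^ j * z))‖ = p * q ^ j * ‖z‖ := by
        rw [norm_neg, show (p:ℂ) * (q:ℂ) ^ j * z = ((p * q ^ j : ℝ) : ℂ) * z by push_cast; ring,
          norm_mul, Complex.norm_real, Real.norm_eq_abs, abs_of_pos (by positivity)]
      have hexp : Real.exp (p * q ^ j * ‖z‖) ≤ Real.exp (p * ‖z‖) :=
        Real.exp_le_exp.2 (by nlinarith [mul_nonneg (mul_nonneg hp.le (norm_nonneg z)) (sub_nonneg.2 hqj1)])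
      calc ‖(1 - Complex.exp (-(p * (q:ℂ) ^ j * z)))‖
          = ‖Complex.exp (-((p:ℂ) * (q:ℂ) ^ j * z)) - 1‖ := by rw [norm_sub_rev]
        _ ≤ ‖(-((p:ℂ) * (q:ℂ) ^ j * z))‖ * Real.exp ‖(-((p:ℂ) * (q:ℂ) ^ j * z))‖ := h
        _ = p * q ^ j * ‖z‖ * Real.exp (p * q ^ j * ‖z‖) := by rw [hn]
        _ ≤ p * ‖z‖ * Real.exp (p * ‖z‖) * q ^ j := by
            nlinarith [Real.exp_pos (p * q ^ j * ‖z‖), norm_nonneg z,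
              mul_nonneg (mul_nonneg hp.le hqj0.le) (norm_nonneg z)]
    have e3 : ‖Ak (p * (q:ℂ) ^ j * z)‖ ≤ M := by
      have : ((p * q ^ j : ℝ) : ℂ) * z = (p : ℂ) * (q:ℂ) ^ j * z := by push_cast; ring
      rw [← this]
      exact hM (p * q ^ j) ⟨by positivity, by nlinarith⟩
    calc ‖T j‖ = ‖Complex.exp (-((1 - (q : ℂ) ^ j) * z))‖
          * ‖(1 - Complex.exp (-(p * (q:ℂ) ^ j * z)))‖ * ‖Ak (p * (q:ℂ) ^ j * z)‖ := by
          simp [hT, norm_mul]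
      _ ≤ 1 * (p * ‖z‖ * Real.exp (p * ‖z‖) * q ^ j) * M :=
          mul_le_mul (mul_le_mul e1 e2 (norm_nonneg _) zero_le_one) e3 (norm_nonneg _)
            (by positivity)
      _ = M * (p * ‖z‖ * Real.exp (p * ‖z‖)) * q ^ j := by ring
  have hsum_norm : Summable (fun j : ℕ => ‖T j‖) := by
    apply Summable.of_nonneg_of_le (fun j => norm_nonneg _) hbound
    exact (summable_geometric_of_lt_one hq0.le hq1).mul_left _
  have hsumT : Summable T := hsum_norm.of_norm
  refine ⟨hsum_norm, ?_⟩
  -- iterated identity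
  have hiter : ∀ n : ℕ, Ak1 z = (∑ j ∈ Finset.range n, T j)
      + Complex.exp (-((1 - (q : ℂ) ^ n) * z)) * Ak1 ((q:ℂ) ^ n * z) := by
    intro n
    induction n with
    | zero =>
      simp only [Finset.sum_range_zero, pow_zero, sub_self, zero_mul, neg_zero,
        Complex.exp_zero, one_mul, zero_add]
    | succ n ih =>
      rw [ih, hrec ((q:ℂ) ^ n * z), Finset.sum_range_succ]
      have hqc : (q : ℂ) = 1 - p := by push_cast [hq]; ring
      have key : Complex.exp (-((1 - (q : ℂ) ^ n) * z)) * Complex.exp (-(p * ((q:ℂ) ^ n * z)))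
          = Complex.exp (-((1 - (q : ℂ) ^ (n+1)) * z)) := by
        rw [← Complex.exp_add]
        congr 1
        rw [pow_succ, hqc]
        ring
      have harg : (p : ℂ) * ((q:ℂ) ^ n * z) = (p:ℂ) * (q:ℂ) ^ n * z := by ring
      have harg2 : (q : ℂ) * ((q:ℂ) ^ n * z) = (q:ℂ) ^ (n+1) * z := by rw [pow_succ]; ring
      rw [harg] at key
      rw [harg, harg2, mul_add, ← mul_assoc, ← mul_assoc, key]
      simp only [hT]
      ring
  -- limits
  have hlim1 : Filter.Tendsto (fun n => ∑ j ∈ Finset.range n, T j) Filter.atTop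
      (nhds (∑' j, T j)) := hsumT.hasSum.tendsto_sum_nat
  have hqlim : Filter.Tendsto (fun n : ℕ => (q:ℂ) ^ n) Filter.atTop (nhds 0) := by
    apply tendsto_pow_atTop_nhds_zero_of_norm_lt_one
    rw [Complex.norm_real, Real.norm_eq_abs, abs_of_pos hq0]; exact hq1
  have hlim2 : Filter.Tendsto
      (fun n : ℕ => Complex.exp (-((1 - (q : ℂ) ^ n) * z)) * Ak1 ((q:ℂ) ^ n * z))
      Filter.atTop (nhds 0) := by
    have h1 : Filter.Tendsto (fun n : ℕ => Complex.exp (-((1 - (q : ℂ) ^ n) * z)))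
        Filter.atTop (nhds (Complex.exp (-z))) := by
      have : Filter.Tendsto (fun n : ℕ => -((1 - (q : ℂ) ^ n) * z)) Filter.atTop
          (nhds (-((1 - 0) * z))) :=
        (((tendsto_const_nhds.sub hqlim).mul tendsto_const_nhds)).neg
      simpa [Function.comp_def] using (Complex.continuous_exp.tendsto _).comp this
    have h2 : Filter.Tendsto (fun n : ℕ => Ak1 ((q:ℂ) ^ n * z)) Filter.atTop (nhds 0) := by
      have : Filter.Tendsto (fun n : ℕ => (q:ℂ) ^ n * z) Filter.atTop (nhds 0) := by
        simpa using hqlim.mul tendsto_const_nhds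
      simpa [hAk10, Function.comp_def] using (hAk1.continuous.tendsto 0).comp this
    simpa using h1.mul h2
  have : Filter.Tendsto (fun n : ℕ => (∑ j ∈ Finset.range n, T j)
      + Complex.exp (-((1 - (q : ℂ) ^ n) * z)) * Ak1 ((q:ℂ) ^ n * z))
      Filter.atTop (nhds (∑' j, T j)) := by
    simpa using hlim1.add hlim2
  have hconst : Filter.Tendsto (fun _ : ℕ => Ak1 z) Filter.atTop (nhds (Ak1 z)) :=
    tendsto_const_nhds
  have := tendsto_nhds_unique (by simpa [← hiter] using this) hconst
  exact this.symm
end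

section
/- For the symmetric case p = 1/2, the generating function identity ∑_{k≥0} Ã_k(z) u^k = ∏_{j≥1} (1 + (u−1)(1 − e^{-z/2^j})) holds, where Ã_k(z) := e^{-z} ∑_{n≥0} P(X_n = k) z^n / n! and X_n is the binomial splitting process with p = 1/2. -/
open Complex Finset

namespace S12


lemma rexp_tsum (x : ℝ) : Real.exp x = ∑' n : ℕ, x ^ n / n.factorial := by
  rw [Real.exp_eq_exp_ℝ, NormedSpace.exp_eq_tsum_div]

lemma cexp_tsum (z : ℂ) : Complex.exp z = ∑' n : ℕ, z ^ n / n.factorial := by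
  rw [Complex.exp_eq_exp_ℂ, NormedSpace.exp_eq_tsum_div]

lemma rsummable (x : ℝ) : Summable (fun n : ℕ => x ^ n / n.factorial) :=
  NormedSpace.expSeries_div_summable x

lemma csummable (z : ℂ) : Summable (fun n : ℕ => z ^ n / n.factorial) :=
  NormedSpace.expSeries_div_summable z

lemma rexp_hasSum (x : ℝ) : HasSum (fun n : ℕ => x ^ n / n.factorial) (Real.exp x) := by
  rw [rexp_tsum]; exact (rsummable x).hasSum

lemma rexp_sub_one_tsum (x : ℝ) :
    Real.exp x - 1 = ∑' n : ℕ, x ^ (n + 1) / (n + 1).factorial := by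
  have := rexp_tsum x
  rw [Summable.tsum_eq_zero_add (rsummable x)] at this
  simp only [pow_zero, Nat.factorial_zero, Nat.cast_one, div_one] at this
  linarith

lemma rexp_sub_one_le (x : ℝ) (hx : 0 ≤ x) : Real.exp x - 1 ≤ x * Real.exp x := by
  have h : Real.exp (-x) * Real.exp x = 1 := by rw [← Real.exp_add]; simp
  nlinarith [Real.add_one_le_exp (-x), Real.exp_pos x]

lemma norm_exp_sub_one_le (z : ℂ) : ‖Complex.exp z - 1‖ ≤ ‖z‖ * Real.exp ‖z‖ := by
  have h1 : Complex.exp z - 1 = ∑' n : ℕ, z ^ (n + 1) / (n + 1).factorial := by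
    have := cexp_tsum z
    rw [Summable.tsum_eq_zero_add (csummable z)] at this
    simp only [pow_zero, Nat.factorial_zero, Nat.cast_one, div_one] at this
    rw [this]; ring
  rw [h1]
  have hb : HasSum (fun n : ℕ => ‖z‖ * (‖z‖ ^ n / n.factorial)) (‖z‖ * Real.exp ‖z‖) :=
    (rexp_hasSum ‖z‖).mul_left _
  refine tsum_of_norm_bounded hb fun n => ?_
  rw [norm_div, norm_pow]
  have h2 : (n.factorial : ℝ) ≤ ((n+1).factorial : ℝ) := by
    exact_mod_cast Nat.factorial_le (Nat.le_succ n)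
  have h3 : ‖((n+1).factorial : ℂ)‖ = ((n+1).factorial : ℝ) := by
    simp [Complex.norm_natCast]
  rw [h3]
  have h4 : ‖z‖ ^ (n + 1) / ((n + 1).factorial : ℝ) ≤ ‖z‖ ^ (n + 1) / (n.factorial : ℝ) := by
    have h2' : (0:ℝ) < (n.factorial : ℝ) := by exact_mod_cast Nat.factorial_pos n
    gcongr
  calc ‖z‖ ^ (n + 1) / ((n + 1).factorial : ℝ) ≤ ‖z‖ ^ (n + 1) / (n.factorial : ℝ) := h4
    _ = ‖z‖ * (‖z‖ ^ n / (n.factorial : ℝ)) := by ring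

lemma norm_one_sub_exp_neg_le (w : ℂ) : ‖1 - Complex.exp (-w)‖ ≤ ‖w‖ * Real.exp ‖w‖ := by
  rw [norm_sub_rev]
  simpa using norm_exp_sub_one_le (-w)



lemma prod_one_add_le_exp {ι : Type*} (s : Finset ι) (b : ι → ℝ) (hb : ∀ i, 0 ≤ b i) :
    ∏ i ∈ s, (1 + b i) ≤ Real.exp (∑ i ∈ s, b i) := by
  rw [Real.exp_sum]
  exact Finset.prod_le_prod (fun i _ => by have := hb i; linarith)
    (fun i _ => by have := Real.add_one_le_exp (b i); linarith)

lemma one_le_prod_one_add {ι : Type*} (s : Finset ι) (b : ι → ℝ) (hb : ∀ i, 0 ≤ b i) :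
    1 ≤ ∏ i ∈ s, (1 + b i) := by
  calc (1:ℝ) = ∏ _i ∈ s, (1:ℝ) := by simp
    _ ≤ ∏ i ∈ s, (1 + b i) :=
      Finset.prod_le_prod (fun i _ => zero_le_one) (fun i _ => by have := hb i; linarith)

lemma norm_prod_one_add_sub_one_le {ι : Type*} (s : Finset ι) (b : ι → ℂ) :
    ‖(∏ i ∈ s, (1 + b i)) - 1‖ ≤ (∏ i ∈ s, (1 + ‖b i‖)) - 1 := by
  induction s using Finset.cons_induction with
  | empty => simp
  | cons i s hi ih =>
    rw [Finset.prod_cons, Finset.prod_cons]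
    have key : (1 + b i) * (∏ j ∈ s, (1 + b j)) - 1
        = (1 + b i) * ((∏ j ∈ s, (1 + b j)) - 1) + b i := by ring
    rw [key]
    have h1 : ‖(1 : ℂ) + b i‖ ≤ 1 + ‖b i‖ := (norm_add_le _ _).trans (by simp)
    have h2 : (1:ℝ) ≤ ∏ j ∈ s, (1 + ‖b j‖) :=
      one_le_prod_one_add s _ (fun j => norm_nonneg _)
    calc ‖(1 + b i) * ((∏ j ∈ s, (1 + b j)) - 1) + b i‖
        ≤ ‖(1 + b i)‖ * ‖(∏ j ∈ s, (1 + b j)) - 1‖ + ‖b i‖ := by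
          refine (norm_add_le _ _).trans ?_; rw [norm_mul]
      _ ≤ (1 + ‖b i‖) * ((∏ j ∈ s, (1 + ‖b j‖)) - 1) + ‖b i‖ := by
          refine add_le_add ?_ le_rfl
          exact mul_le_mul h1 ih (norm_nonneg _) (by positivity)
      _ = (1 + ‖b i‖) * (∏ j ∈ s, (1 + ‖b j‖)) - 1 := by ring

lemma norm_prod_one_add_le {ι : Type*} (s : Finset ι) (b : ι → ℂ) :
    ‖∏ i ∈ s, (1 + b i)‖ ≤ ∏ i ∈ s, (1 + ‖b i‖) := by
  rw [norm_prod]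
  exact Finset.prod_le_prod (fun i _ => norm_nonneg _)
    (fun i _ => (norm_add_le _ _).trans (by simp))

lemma multipliable_one_add (b : ℕ → ℂ) (hb : Summable fun i => ‖b i‖) :
    Multipliable (fun i => 1 + b i) := by
  set B := Real.exp (∑' i, ‖b i‖) with hBdef
  have hB1 : (1:ℝ) ≤ B := Real.one_le_exp (tsum_nonneg fun i => norm_nonneg _)
  have hB0 : (0:ℝ) < B := lt_of_lt_of_le one_pos hB1
  have hPs : ∀ s : Finset ℕ, ‖∏ i ∈ s, (1 + b i)‖ ≤ B := by
    intro s
    refine (norm_prod_one_add_le s b).trans ?_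
    refine (prod_one_add_le_exp s _ fun i => norm_nonneg _).trans ?_
    exact Real.exp_le_exp.2 (Summable.sum_le_tsum s (fun i _ => norm_nonneg _) hb)
  have hcs : CauchySeq (fun s : Finset ℕ => ∏ i ∈ s, (1 + b i)) := by
    rw [Metric.cauchySeq_iff']
    intro ε hε
    have hδ : (0:ℝ) < Real.log (1 + ε / B) := by
      apply Real.log_pos; have : 0 < ε / B := div_pos hε hB0; linarith
    obtain ⟨s₀, hs₀⟩ := (summable_iff_vanishing.1 hb) (Metric.ball 0 (Real.log (1 + ε / B)))
      (Metric.ball_mem_nhds 0 hδ)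
    refine ⟨s₀, fun s hs => ?_⟩
    rw [dist_eq_norm]
    have hsub : (∏ i ∈ s, (1 + b i)) - (∏ i ∈ s₀, (1 + b i))
        = ((∏ i ∈ s \ s₀, (1 + b i)) - 1) * (∏ i ∈ s₀, (1 + b i)) := by
      rw [sub_mul, one_mul, Finset.prod_sdiff hs]
    rw [hsub, norm_mul]
    have h1 : ‖(∏ i ∈ s \ s₀, (1 + b i)) - 1‖ ≤ Real.exp (∑ i ∈ s \ s₀, ‖b i‖) - 1 := by
      refine (norm_prod_one_add_sub_one_le _ _).trans ?_
      have := prod_one_add_le_exp (s \ s₀) (fun i => ‖b i‖) (fun i => norm_nonneg _)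
      linarith
    have h2 : ∑ i ∈ s \ s₀, ‖b i‖ < Real.log (1 + ε / B) := by
      have := hs₀ (s \ s₀) (Finset.sdiff_disjoint)
      rw [Metric.mem_ball, dist_zero_right] at this
      calc ∑ i ∈ s \ s₀, ‖b i‖ ≤ ‖∑ i ∈ s \ s₀, ‖b i‖‖ := le_abs_self _
        _ < _ := this
    have h3 : Real.exp (∑ i ∈ s \ s₀, ‖b i‖) - 1 < ε / B := by
      have := Real.exp_lt_exp.2 h2
      rw [Real.exp_log (by positivity : (0:ℝ) < 1 + ε / B)] at this
      linarith
    have hnn : (0:ℝ) ≤ Real.exp (∑ i ∈ s \ s₀, ‖b i‖) - 1 := by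
      have h0 : (0:ℝ) ≤ ∑ i ∈ s \ s₀, ‖b i‖ := Finset.sum_nonneg fun i _ => norm_nonneg (b i)
      have := Real.one_le_exp h0
      linarith
    calc ‖(∏ i ∈ s \ s₀, (1 + b i)) - 1‖ * ‖∏ i ∈ s₀, (1 + b i)‖
        ≤ (Real.exp (∑ i ∈ s \ s₀, ‖b i‖) - 1) * B :=
          mul_le_mul h1 (hPs s₀) (norm_nonneg _) hnn
      _ < (ε / B) * B := mul_lt_mul_of_pos_right h3 hB0
      _ = ε := by field_simp
  obtain ⟨x, hx⟩ := cauchySeq_tendsto_of_complete hcs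
  exact ⟨x, hx⟩

lemma norm_tprod_one_add_sub_one_le (b : ℕ → ℂ) (hb : Summable fun i => ‖b i‖) :
    ‖(∏' i, (1 + b i)) - 1‖ ≤ Real.exp (∑' i, ‖b i‖) - 1 := by
  have hm := multipliable_one_add b hb
  have ht : Filter.Tendsto (fun s : Finset ℕ => ‖(∏ i ∈ s, (1 + b i)) - 1‖)
      Filter.atTop (nhds ‖(∏' i, (1 + b i)) - 1‖) :=
    ((hm.hasProd.sub tendsto_const_nhds).norm)
  refine le_of_tendsto ht (Filter.Eventually.of_forall fun s => ?_)
  refine (norm_prod_one_add_sub_one_le s b).trans ?_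
  have h1 := prod_one_add_le_exp s (fun i => ‖b i‖) (fun i => norm_nonneg _)
  have h2 : Real.exp (∑ i ∈ s, ‖b i‖) ≤ Real.exp (∑' i, ‖b i‖) :=
    Real.exp_le_exp.2 (Summable.sum_le_tsum s (fun i _ => norm_nonneg _) hb)
  linarith



variable {a : ℕ → ℕ → ℝ}

lemma sum_choose_real (n : ℕ) (hn : 1 ≤ n) :
    ∑ j ∈ Finset.range n, (n.choose j : ℝ) = 2 ^ n - 1 := by
  have h : ∑ j ∈ Finset.range n, n.choose j + 1 = 2 ^ n := by
    obtain ⟨m, rfl⟩ := Nat.exists_eq_add_of_le' hn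
    have := Nat.sum_range_choose (m + 1)
    rw [Finset.sum_range_succ, Nat.choose_self] at this
    exact this
  have h2 := congrArg (Nat.cast : ℕ → ℝ) h
  push_cast at h2
  linarith

lemma a_bounds (ha00 : a 0 0 = 1) (ha0 : ∀ k, a 0 (k + 1) = 0)
    (han0 : ∀ n, 1 ≤ n → a n 0 = 0)
    (harec : ∀ n, 1 ≤ n → ∀ k, a n (k + 1) =
      ∑ j ∈ Finset.range n, (n.choose j : ℝ) / (2 ^ n - 1) * a j k) :
    ∀ n k, 0 ≤ a n k ∧ a n k ≤ 1 := by
  intro n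
  induction n using Nat.strong_induction_on with
  | _ n ih =>
    intro k
    match n, k with
    | 0, 0 => simp [ha00]
    | 0, k + 1 => simp [ha0]
    | n + 1, 0 => simp [han0 (n + 1) (by omega)]
    | n + 1, k + 1 =>
      rw [harec (n + 1) (by omega) k]
      have hpow : (1:ℝ) < 2 ^ (n + 1) := by
        have : (2:ℝ) ^ 0 < 2 ^ (n+1) := by
          apply pow_lt_pow_right₀ one_lt_two (Nat.succ_pos n)
        simpa using this
      have hden : (0:ℝ) < 2 ^ (n + 1) - 1 := by linarith
      constructor
      · apply Finset.sum_nonneg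
        intro j hj
        have hj' := ih j (Finset.mem_range.mp hj) k
        have : (0:ℝ) ≤ ((n+1).choose j : ℝ) / (2 ^ (n+1) - 1) := by positivity
        exact mul_nonneg this hj'.1
      · calc ∑ j ∈ Finset.range (n+1), ((n+1).choose j : ℝ) / (2 ^ (n+1) - 1) * a j k
            ≤ ∑ j ∈ Finset.range (n+1), ((n+1).choose j : ℝ) / (2 ^ (n+1) - 1) * 1 := by
              apply Finset.sum_le_sum
              intro j hj
              have hj' := ih j (Finset.mem_range.mp hj) k
              have hc : (0:ℝ) ≤ ((n+1).choose j : ℝ) / (2 ^ (n+1) - 1) := by positivity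
              exact mul_le_mul_of_nonneg_left hj'.2 hc
          _ = 1 := by
              simp only [mul_one]
              rw [← Finset.sum_div, sum_choose_real (n+1) (by omega)]
              exact div_self (ne_of_gt hden)

lemma a_eq_zero_of_lt (ha0 : ∀ k, a 0 (k + 1) = 0)
    (harec : ∀ n, 1 ≤ n → ∀ k, a n (k + 1) =
      ∑ j ∈ Finset.range n, (n.choose j : ℝ) / (2 ^ n - 1) * a j k) :
    ∀ k n, n < k → a n k = 0 := by
  intro k
  induction k with
  | zero => intro n hn; omega
  | succ k ih =>
    intro n hn
    match n with
    | 0 => exact ha0 k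
    | n + 1 =>
      rw [harec (n + 1) (by omega) k]
      apply Finset.sum_eq_zero
      intro j hj
      have : j < k := by have := Finset.mem_range.mp hj; omega
      rw [ih j this, mul_zero]


noncomputable def fS (a : ℕ → ℕ → ℝ) (k : ℕ) (z : ℂ) : ℂ :=
  ∑' n : ℕ, (a n k : ℂ) * z ^ n / (n.factorial : ℂ)

variable {a : ℕ → ℕ → ℝ}

lemma norm_term_eq (x : ℝ) (z : ℂ) (n : ℕ) :
    ‖(x : ℂ) * z ^ n / (n.factorial : ℂ)‖ = |x| * ‖z‖ ^ n / (n.factorial : ℝ) := by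
  rw [norm_div, norm_mul, Complex.norm_real, norm_pow, Complex.norm_natCast, Real.norm_eq_abs]

lemma term_norm_le (hbnd : ∀ n k, 0 ≤ a n k ∧ a n k ≤ 1) (k : ℕ) (z : ℂ) (n : ℕ) :
    ‖(a n k : ℂ) * z ^ n / (n.factorial : ℂ)‖ ≤ ‖z‖ ^ n / (n.factorial : ℝ) := by
  rw [norm_term_eq]
  have h1 : |a n k| ≤ 1 := abs_le.2 ⟨by linarith [(hbnd n k).1], (hbnd n k).2⟩
  have h2 : (0:ℝ) < (n.factorial : ℝ) := by exact_mod_cast Nat.factorial_pos n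
  rw [div_le_div_iff₀ h2 h2]
  have : |a n k| * ‖z‖ ^ n ≤ ‖z‖ ^ n := by
    nlinarith [abs_nonneg (a n k), pow_nonneg (norm_nonneg z) n]
  nlinarith

lemma summable_term_norm (hbnd : ∀ n k, 0 ≤ a n k ∧ a n k ≤ 1) (k : ℕ) (z : ℂ) :
    Summable fun n : ℕ => ‖(a n k : ℂ) * z ^ n / (n.factorial : ℂ)‖ := by
  refine Summable.of_nonneg_of_le (fun n => norm_nonneg _) (term_norm_le hbnd k z) ?_
  exact rsummable ‖z‖

lemma summable_term (hbnd : ∀ n k, 0 ≤ a n k ∧ a n k ≤ 1) (k : ℕ) (z : ℂ) :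
    Summable fun n : ℕ => (a n k : ℂ) * z ^ n / (n.factorial : ℂ) :=
  (summable_term_norm hbnd k z).of_norm

lemma fS_zero (ha00 : a 0 0 = 1) (han0 : ∀ n, 1 ≤ n → a n 0 = 0) (z : ℂ) :
    fS a 0 z = 1 := by
  rw [fS, tsum_eq_single 0]
  · simp [ha00]
  · intro n hn
    rw [han0 n (Nat.one_le_iff_ne_zero.2 hn)]
    simp

set_option maxHeartbeats 1000000 in
lemma norm_fS_le (hbnd : ∀ n k, 0 ≤ a n k ∧ a n k ≤ 1)
    (hzero : ∀ k n, n < k → a n k = 0) (k : ℕ) (z : ℂ) :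
    ‖fS a k z‖ ≤ Real.exp ‖z‖ * (‖z‖ ^ k / (k.factorial : ℝ)) := by
  have hnorm := summable_term_norm hbnd k z
  refine (norm_tsum_le_tsum_norm hnorm).trans ?_
  rw [← Summable.sum_add_tsum_nat_add k hnorm]
  have h1 : ∑ i ∈ Finset.range k, ‖(a i k : ℂ) * z ^ i / (i.factorial : ℂ)‖ = 0 := by
    apply Finset.sum_eq_zero
    intro i hi
    rw [hzero k i (Finset.mem_range.mp hi)]
    simp
  rw [h1, zero_add]
  have hsummand : ∀ m : ℕ, ‖(a (m + k) k : ℂ) * z ^ (m + k) / ((m + k).factorial : ℂ)‖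
      ≤ (‖z‖ ^ k / (k.factorial : ℝ)) * (‖z‖ ^ m / (m.factorial : ℝ)) := by
    intro m
    refine (term_norm_le hbnd k z (m + k)).trans ?_
    have hfac : (k.factorial * m.factorial : ℝ) ≤ ((m + k).factorial : ℝ) := by
      exact_mod_cast Nat.le_of_dvd (Nat.factorial_pos _)
        (by rw [add_comm m k]; exact Nat.factorial_mul_factorial_dvd_factorial_add k m)
    have hkm : (0:ℝ) < (k.factorial * m.factorial : ℝ) := by positivity
    rw [pow_add, div_mul_div_comm, mul_comm (‖z‖ ^ m)]
    push_cast at hfac hkm ⊢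
    gcongr
  refine (Summable.tsum_le_tsum hsummand ((summable_nat_add_iff k).2 hnorm) ?_).trans ?_
  · exact (rsummable ‖z‖).mul_left _
  · rw [tsum_mul_left, ← rexp_tsum]
    rw [mul_comm]

set_option maxHeartbeats 1000000 in
lemma fS_feq (ha00 : a 0 0 = 1) (ha0 : ∀ k, a 0 (k + 1) = 0)
    (hbnd : ∀ n k, 0 ≤ a n k ∧ a n k ≤ 1)
    (harec : ∀ n, 1 ≤ n → ∀ k, a n (k + 1) =
      ∑ j ∈ Finset.range n, (n.choose j : ℝ) / (2 ^ n - 1) * a j k)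
    (k : ℕ) (w : ℂ) :
    fS a (k + 1) (2 * w) = (Complex.exp w - 1) * fS a k w + fS a (k + 1) w := by
  -- the Cauchy product coefficient
  set c : ℕ → ℂ := fun n =>
    ((∑ j ∈ Finset.range (n + 1), (n.choose j : ℝ) * a j k : ℝ) : ℂ) * w ^ n
      / (n.factorial : ℂ) with hc
  have hexp_norm : Summable fun n : ℕ => ‖w ^ n / (n.factorial : ℂ)‖ := by
    refine Summable.congr (rsummable ‖w‖) fun n => ?_
    rw [norm_div, norm_pow, Complex.norm_natCast]
  have hf_norm := summable_term_norm hbnd k w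
  -- Cauchy product identity
  have hcauchy : Complex.exp w * fS a k w
      = ∑' n : ℕ, ∑ i ∈ Finset.range (n + 1),
          (w ^ i / (i.factorial : ℂ)) * ((a (n - i) k : ℂ) * w ^ (n - i) / ((n - i).factorial : ℂ)) := by
    rw [cexp_tsum, fS]
    exact tsum_mul_tsum_eq_tsum_sum_range_of_summable_norm hexp_norm hf_norm
  -- coefficient computation
  have hcoeff : ∀ n : ℕ, ∑ i ∈ Finset.range (n + 1),
      (w ^ i / (i.factorial : ℂ)) * ((a (n - i) k : ℂ) * w ^ (n - i) / ((n - i).factorial : ℂ))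
      = c n := by
    intro n
    have h1 : ∀ i ∈ Finset.range (n + 1),
        (w ^ i / (i.factorial : ℂ)) * ((a (n - i) k : ℂ) * w ^ (n - i) / ((n - i).factorial : ℂ))
        = (((n.choose (n - i) : ℝ) * a (n - i) k : ℝ) : ℂ) * w ^ n / (n.factorial : ℂ) := by
      intro i hi
      have hin : i ≤ n := Nat.lt_succ_iff.mp (Finset.mem_range.mp hi)
      have hchoose : (n.factorial : ℂ)
          = (n.choose (n - i) : ℂ) * ((n - i).factorial : ℂ) * ((n - (n - i)).factorial : ℂ) := by
        exact_mod_cast (Nat.choose_mul_factorial_mul_factorial (Nat.sub_le n i)).symm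
      rw [Nat.sub_sub_self hin] at hchoose
      have hw : w ^ i * w ^ (n - i) = w ^ n := by
        rw [← pow_add, Nat.add_sub_cancel' hin]
      have hif : ((i.factorial : ℂ)) ≠ 0 := by
        exact_mod_cast Nat.cast_ne_zero.mpr (Nat.factorial_ne_zero i)
      have hnif : (((n - i).factorial : ℂ)) ≠ 0 := by
        exact_mod_cast Nat.cast_ne_zero.mpr (Nat.factorial_ne_zero (n - i))
      have hnf : ((n.factorial : ℂ)) ≠ 0 := by
        exact_mod_cast Nat.cast_ne_zero.mpr (Nat.factorial_ne_zero n)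
      field_simp
      rw [hchoose, ← hw, Nat.choose_symm hin]
      push_cast
      ring
    rw [Finset.sum_congr rfl h1, hc, ← Finset.sum_div, ← Finset.sum_mul]
    congr 2
    have hrefl := Finset.sum_range_reflect (fun j => (n.choose j : ℝ) * a j k) (n + 1)
    simp only [Nat.add_sub_cancel] at hrefl
    have : ∑ i ∈ Finset.range (n + 1), (((n.choose (n - i) : ℝ) * a (n - i) k : ℝ) : ℂ)
        = ((∑ i ∈ Finset.range (n + 1), (n.choose (n - i) : ℝ) * a (n - i) k : ℝ) : ℂ) := by
      push_cast; rfl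
    rw [this]
    exact_mod_cast hrefl
  -- termwise identity for the left-hand side
  have hterm : ∀ n : ℕ, (a n (k + 1) : ℂ) * (2 * w) ^ n / (n.factorial : ℂ)
      = c n - (a n k : ℂ) * w ^ n / (n.factorial : ℂ)
        + (a n (k + 1) : ℂ) * w ^ n / (n.factorial : ℂ) := by
    intro n
    have hreal : ∑ j ∈ Finset.range (n + 1), (n.choose j : ℝ) * a j k
        = (2 ^ n - 1) * a n (k + 1) + a n k := by
      rcases Nat.eq_zero_or_pos n with hn | hn
      · subst hn; simp
      · have hD : (2:ℝ) ^ n - 1 ≠ 0 := by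
          have : (2:ℝ) ^ 0 < 2 ^ n := pow_lt_pow_right₀ one_lt_two hn
          simp only [pow_zero] at this
          linarith
        have h := harec n hn k
        have h2 : ∑ j ∈ Finset.range n, (n.choose j : ℝ) * a j k
            = (2 ^ n - 1) * a n (k + 1) := by
          rw [h, Finset.mul_sum]
          apply Finset.sum_congr rfl
          intro j _
          field_simp
        rw [Finset.sum_range_succ, Nat.choose_self, h2]
        push_cast
        ring
    have hcast : ((∑ j ∈ Finset.range (n + 1), (n.choose j : ℝ) * a j k : ℝ) : ℂ)
        = ((2:ℂ) ^ n - 1) * (a n (k + 1) : ℂ) + (a n k : ℂ) := by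
      rw [hreal]; push_cast; ring
    rw [hc]
    simp only []
    rw [hcast]
    have hnf : ((n.factorial : ℂ)) ≠ 0 := by
      exact_mod_cast Nat.cast_ne_zero.mpr (Nat.factorial_ne_zero n)
    have h2n : ((2:ℂ) * w) ^ n = (2:ℂ) ^ n * w ^ n := mul_pow 2 w n
    rw [h2n]
    field_simp
    ring
  -- assemble
  have hsummc : Summable c := by
    refine Summable.congr ?_ hcoeff
    exact (summable_norm_sum_mul_range_of_summable_norm hexp_norm hf_norm).of_norm
  have hs1 := summable_term hbnd k w
  have hs2 := summable_term hbnd (k + 1) w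
  have hC : ∑' n, c n = Complex.exp w * fS a k w := by
    rw [hcauchy]; exact (tsum_congr hcoeff).symm
  calc fS a (k + 1) (2 * w)
      = ∑' n : ℕ, ((c n - (a n k : ℂ) * w ^ n / (n.factorial : ℂ))
          + (a n (k + 1) : ℂ) * w ^ n / (n.factorial : ℂ)) := by
        refine tsum_congr fun n => ?_
        rw [hterm n]
    _ = (∑' n : ℕ, (c n - (a n k : ℂ) * w ^ n / (n.factorial : ℂ)))
          + ∑' n : ℕ, (a n (k + 1) : ℂ) * w ^ n / (n.factorial : ℂ) :=
        Summable.tsum_add (hsummc.sub hs1) hs2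
    _ = ((∑' n : ℕ, c n) - ∑' n : ℕ, (a n k : ℂ) * w ^ n / (n.factorial : ℂ))
          + ∑' n : ℕ, (a n (k + 1) : ℂ) * w ^ n / (n.factorial : ℂ) := by
        rw [Summable.tsum_sub hsummc hs1]
    _ = (Complex.exp w * fS a k w - fS a k w) + fS a (k + 1) w := by rw [hC]; rfl
    _ = (Complex.exp w - 1) * fS a k w + fS a (k + 1) w := by ring


end S12

open Complex Finset

set_option maxHeartbeats 2000000 in
/-- In the symmetric case `p = 1/2`, the generating function identity
`∑_{k≥0} Ã_k(z) u^k = ∏_{j≥1} (1 + (u−1)(1 − e^{-z/2^j}))` holds for `Re(z) > 0`,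
where `Ã_k(z) := e^{-z} ∑_{n≥0} P(X_n = k) z^n/n!` and `a n k = P(X_n = k)` with
`P(I_n = j) = C(n,j)/(2^n − 1)`. -/
theorem stmt_12 (a : ℕ → ℕ → ℝ) (ha00 : a 0 0 = 1) (ha0 : ∀ k, a 0 (k + 1) = 0)
    (han0 : ∀ n, 1 ≤ n → a n 0 = 0)
    (harec : ∀ n, 1 ≤ n → ∀ k, a n (k + 1) =
      ∑ j ∈ Finset.range n, (n.choose j : ℝ) / (2 ^ n - 1) * a j k)
    (A : ℕ → ℂ → ℂ)
    (hA : ∀ k z, A k z = Complex.exp (-z) *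
      ∑' n : ℕ, (a n k : ℂ) * z ^ n / (n.factorial : ℂ)) :
    ∀ z u : ℂ, 0 < z.re →
      ∑' k : ℕ, A k z * u ^ k
        = ∏' j : ℕ, (1 + (u - 1) * (1 - Complex.exp (-(z / 2 ^ (j + 1))))) := by
  intro z u _
  have hbnd := S12.a_bounds ha00 ha0 han0 harec
  have hzero := S12.a_eq_zero_of_lt ha0 harec
  have hAf : ∀ k w, A k w = Complex.exp (-w) * S12.fS a k w := by
    intro k w; rw [hA k w]; rfl
  -- notation
  set φ : ℂ → ℂ := fun w => 1 + (u - 1) * (1 - Complex.exp (-w)) with hφ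
  set b : ℂ → ℕ → ℂ := fun w j => (u - 1) * (1 - Complex.exp (-(w / 2 ^ (j + 1)))) with hb
  set F : ℂ → ℂ := fun w => ∑' k : ℕ, A k w * u ^ k with hF
  -- norms and summability
  have normA : ∀ (k : ℕ) (w : ℂ), ‖A k w * u ^ k‖
      ≤ Real.exp ‖w‖ * Real.exp ‖w‖ * ((‖w‖ * ‖u‖) ^ k / (k.factorial : ℝ)) := by
    intro k w
    rw [hAf, norm_mul, norm_mul]
    have h1 : ‖Complex.exp (-w)‖ ≤ Real.exp ‖w‖ := by
      rw [Complex.norm_exp]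
      refine Real.exp_le_exp.2 ?_
      calc (-w).re ≤ |(-w).re| := le_abs_self _
        _ ≤ ‖-w‖ := Complex.abs_re_le_norm _
        _ = ‖w‖ := by rw [norm_neg]
    have h2 := S12.norm_fS_le hbnd hzero k w
    calc ‖Complex.exp (-w)‖ * ‖S12.fS a k w‖ * ‖u ^ k‖
        ≤ Real.exp ‖w‖ * (Real.exp ‖w‖ * (‖w‖ ^ k / (k.factorial : ℝ))) * ‖u‖ ^ k := by
          rw [norm_pow]
          exact mul_le_mul (mul_le_mul h1 h2 (norm_nonneg _) (Real.exp_pos _).le)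
            le_rfl (by positivity) (by positivity)
      _ = Real.exp ‖w‖ * Real.exp ‖w‖ * ((‖w‖ * ‖u‖) ^ k / (k.factorial : ℝ)) := by
          rw [mul_pow]; ring
  have summable_normAu : ∀ w : ℂ, Summable fun k : ℕ => ‖A k w * u ^ k‖ := by
    intro w
    refine Summable.of_nonneg_of_le (fun k => norm_nonneg _) (normA · w) ?_
    exact (S12.rsummable (‖w‖ * ‖u‖)).mul_left _
  have summable_Au : ∀ w : ℂ, Summable fun k : ℕ => A k w * u ^ k :=
    fun w => (summable_normAu w).of_norm
  -- A-level recurrence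
  have hA0 : ∀ w : ℂ, A 0 w = Complex.exp (-w) := by
    intro w; rw [hAf, S12.fS_zero ha00 han0, mul_one]
  have hArec : ∀ (k : ℕ) (w : ℂ), A (k + 1) (2 * w)
      = (1 - Complex.exp (-w)) * A k w + Complex.exp (-w) * A (k + 1) w := by
    intro k w
    rw [hAf, hAf, hAf, S12.fS_feq ha00 ha0 hbnd harec k w]
    have e1 : Complex.exp (-(2 * w)) = Complex.exp (-w) * Complex.exp (-w) := by
      rw [← Complex.exp_add]; ring_nf
    have e2 : Complex.exp (-w) * Complex.exp w = 1 := by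
      rw [← Complex.exp_add]; simp
    rw [e1]
    linear_combination (S12.fS a k w) * Complex.exp (-w) * e2
  -- functional equation for F
  have hFeq : ∀ w : ℂ, F (2 * w) = φ w * F w := by
    intro w
    have hs := summable_Au (2 * w)
    have hsw := summable_Au w
    have hshift : Summable fun k : ℕ => A (k + 1) w * u ^ (k + 1) :=
      (summable_nat_add_iff (f := fun k : ℕ => A k w * u ^ k) 1).2 hsw
    have hs1 : Summable fun k : ℕ => ((1 - Complex.exp (-w)) * u) * (A k w * u ^ k) :=
      hsw.mul_left _
    have hs2 : Summable fun k : ℕ => Complex.exp (-w) * (A (k + 1) w * u ^ (k + 1)) :=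
      hshift.mul_left _
    have htail : F w = A 0 w * u ^ 0 + ∑' k : ℕ, A (k + 1) w * u ^ (k + 1) :=
      Summable.tsum_eq_zero_add hsw
    calc F (2 * w) = A 0 (2 * w) * u ^ 0 + ∑' k : ℕ, A (k + 1) (2 * w) * u ^ (k + 1) :=
          Summable.tsum_eq_zero_add hs
      _ = Complex.exp (-w) * (A 0 w * u ^ 0)
          + ∑' k : ℕ, (((1 - Complex.exp (-w)) * u) * (A k w * u ^ k)
              + Complex.exp (-w) * (A (k + 1) w * u ^ (k + 1))) := by
          congr 1
          · rw [hA0, hA0]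
            have : Complex.exp (-(2 * w)) = Complex.exp (-w) * Complex.exp (-w) := by
              rw [← Complex.exp_add]; ring_nf
            rw [this]; ring
          · refine tsum_congr fun k => ?_
            rw [hArec k w]
            ring
      _ = Complex.exp (-w) * (A 0 w * u ^ 0)
          + (((1 - Complex.exp (-w)) * u) * ∑' k : ℕ, A k w * u ^ k
            + Complex.exp (-w) * ∑' k : ℕ, A (k + 1) w * u ^ (k + 1)) := by
          rw [Summable.tsum_add hs1 hs2, tsum_mul_left, tsum_mul_left]
      _ = ((1 - Complex.exp (-w)) * u) * F w
          + Complex.exp (-w) * (A 0 w * u ^ 0 + ∑' k : ℕ, A (k + 1) w * u ^ (k + 1)) := by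
          ring
      _ = φ w * F w := by rw [← htail, hφ]; ring
  -- product facts
  have hG : Summable fun j : ℕ => ((1:ℝ)/2) ^ (j + 1) :=
    (summable_nat_add_iff 1).2 (summable_geometric_of_lt_one (by norm_num) (by norm_num))
  set G : ℝ := ∑' j : ℕ, ((1:ℝ)/2) ^ (j + 1) with hGdef
  have hG0 : 0 ≤ G := tsum_nonneg fun j => by positivity
  have hb_le : ∀ (w : ℂ) (j : ℕ),
      ‖b w j‖ ≤ (‖u - 1‖ * ‖w‖ * Real.exp ‖w‖) * ((1:ℝ)/2) ^ (j + 1) := by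
    intro w j
    rw [hb]
    simp only [norm_mul]
    have hn2 : ‖w / 2 ^ (j + 1)‖ = ‖w‖ / 2 ^ (j + 1) := by
      rw [norm_div, norm_pow]
      norm_num
    have h2j : (1:ℝ) ≤ 2 ^ (j + 1) := by
      have h := pow_le_pow_left₀ (by norm_num : (0:ℝ) ≤ 1) (by norm_num : (1:ℝ) ≤ 2) (j + 1)
      simpa using h
    have hle' : ‖w‖ / 2 ^ (j + 1) ≤ ‖w‖ := by
      calc ‖w‖ / 2 ^ (j + 1) ≤ ‖w‖ / 1 := by gcongr
          _ = ‖w‖ := div_one _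
    calc ‖u - 1‖ * ‖1 - Complex.exp (-(w / 2 ^ (j + 1)))‖
        ≤ ‖u - 1‖ * (‖w / 2 ^ (j + 1)‖ * Real.exp ‖w / 2 ^ (j + 1)‖) := by
          gcongr
          exact S12.norm_one_sub_exp_neg_le _
      _ ≤ ‖u - 1‖ * ((‖w‖ / 2 ^ (j + 1)) * Real.exp ‖w‖) := by
          rw [hn2]
          gcongr
      _ = (‖u - 1‖ * ‖w‖ * Real.exp ‖w‖) * ((1:ℝ)/2) ^ (j + 1) := by
          rw [div_pow]
          ring
  have hsum_b : ∀ w : ℂ, Summable fun j : ℕ => ‖b w j‖ := by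
    intro w
    exact Summable.of_nonneg_of_le (fun j => norm_nonneg _) (hb_le w) (hG.mul_left _)
  have htsum_b : ∀ w : ℂ, ∑' j : ℕ, ‖b w j‖ ≤ (‖u - 1‖ * ‖w‖ * Real.exp ‖w‖) * G := by
    intro w
    calc ∑' j : ℕ, ‖b w j‖
        ≤ ∑' j : ℕ, (‖u - 1‖ * ‖w‖ * Real.exp ‖w‖) * ((1:ℝ)/2) ^ (j + 1) :=
          Summable.tsum_le_tsum (hb_le w) (hsum_b w) (hG.mul_left _)
      _ = _ := by rw [tsum_mul_left]
  have hmult : ∀ w : ℂ, Multipliable fun j : ℕ => φ (w / 2 ^ (j + 1)) := by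
    intro w
    exact S12.multipliable_one_add (b w) (hsum_b w)
  set P : ℂ → ℂ := fun w => ∏' j : ℕ, φ (w / 2 ^ (j + 1)) with hP
  have hhalf : ∀ (w : ℂ) (j : ℕ), w / 2 ^ (j + 1 + 1) = (w / 2) / 2 ^ (j + 1) := by
    intro w j
    rw [div_div, ← pow_succ']
  have hPeq : ∀ w : ℂ, P w = φ (w / 2) * P (w / 2) := by
    intro w
    have hmshift : Multipliable fun j : ℕ => φ (w / 2 ^ (j + 1 + 1)) := by
      refine (hmult (w / 2)).congr fun j => ?_
      rw [hhalf]
    have h0 := tprod_eq_zero_mul' (f := fun j : ℕ => φ (w / 2 ^ (j + 1))) hmshift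
    calc P w = ∏' j : ℕ, φ (w / 2 ^ (j + 1)) := rfl
      _ = φ (w / 2 ^ (0 + 1)) * ∏' j : ℕ, φ (w / 2 ^ (j + 1 + 1)) := h0
      _ = φ (w / 2) * ∏' j : ℕ, φ ((w / 2) / 2 ^ (j + 1)) := by
          congr 1
          · norm_num
          · exact tprod_congr fun j => by rw [hhalf]
      _ = φ (w / 2) * P (w / 2) := rfl
  -- iterates
  have hpow_half : ∀ m : ℕ, (2:ℂ) * (z / 2 ^ (m + 1)) = z / 2 ^ m := by
    intro m
    rw [pow_succ]
    field_simp
  have hFiter : ∀ m : ℕ, F z = (∏ j ∈ Finset.range m, φ (z / 2 ^ (j + 1))) * F (z / 2 ^ m) := by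
    intro m
    induction m with
    | zero => simp
    | succ m ih =>
      rw [ih, Finset.prod_range_succ]
      have := hFeq (z / 2 ^ (m + 1))
      rw [hpow_half m] at this
      rw [this]
      ring
  have hPiter : ∀ m : ℕ, P z = (∏ j ∈ Finset.range m, φ (z / 2 ^ (j + 1))) * P (z / 2 ^ m) := by
    intro m
    induction m with
    | zero => simp
    | succ m ih =>
      rw [ih, Finset.prod_range_succ]
      have h1 := hPeq (z / 2 ^ m)
      have h2 : z / 2 ^ m / 2 = z / 2 ^ (m + 1) := by
        rw [div_div, ← pow_succ]
      rw [h2] at h1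
      rw [h1]
      ring
  have key : ∀ m : ℕ, F z - P z
      = (∏ j ∈ Finset.range m, φ (z / 2 ^ (j + 1))) * (F (z / 2 ^ m) - P (z / 2 ^ m)) := by
    intro m
    rw [hFiter m, hPiter m]
    ring
  -- limits
  have hvnorm : Filter.Tendsto (fun m : ℕ => ‖z / 2 ^ m‖) Filter.atTop (nhds 0) := by
    have h1 : ∀ m : ℕ, ‖z / 2 ^ m‖ = ‖z‖ * ((1:ℝ)/2) ^ m := by
      intro m
      rw [norm_div, norm_pow, div_pow]
      norm_num
      ring
    simp only [h1]
    have := tendsto_pow_atTop_nhds_zero_of_lt_one (by norm_num : (0:ℝ) ≤ 1/2) (by norm_num)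
    have h2 := this.const_mul ‖z‖
    simpa using h2
  -- ‖F v − 1‖ bound
  have hFbound : ∀ v : ℂ, ‖F v - 1‖
      ≤ ‖v‖ * Real.exp ‖v‖
        + (Real.exp ‖v‖ * Real.exp ‖v‖) * (Real.exp (‖v‖ * ‖u‖) - 1) := by
    intro v
    have hsv := summable_Au v
    have htail : F v = A 0 v * u ^ 0 + ∑' k : ℕ, A (k + 1) v * u ^ (k + 1) :=
      Summable.tsum_eq_zero_add hsv
    have hA0v : A 0 v * u ^ 0 = Complex.exp (-v) := by rw [hA0]; simp
    have hshiftnorm : Summable fun k : ℕ => ‖A (k + 1) v * u ^ (k + 1)‖ :=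
      (summable_nat_add_iff (f := fun k : ℕ => ‖A k v * u ^ k‖) 1).2 (summable_normAu v)
    have hTbound : ‖∑' k : ℕ, A (k + 1) v * u ^ (k + 1)‖
        ≤ (Real.exp ‖v‖ * Real.exp ‖v‖) * (Real.exp (‖v‖ * ‖u‖) - 1) := by
      refine (norm_tsum_le_tsum_norm hshiftnorm).trans ?_
      have hbnd2 : ∀ k : ℕ, ‖A (k + 1) v * u ^ (k + 1)‖
          ≤ (Real.exp ‖v‖ * Real.exp ‖v‖) * ((‖v‖ * ‖u‖) ^ (k + 1) / ((k + 1).factorial : ℝ)) :=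
        fun k => normA (k + 1) v
      have hsum2 : Summable fun k : ℕ =>
          (Real.exp ‖v‖ * Real.exp ‖v‖) * ((‖v‖ * ‖u‖) ^ (k + 1) / ((k + 1).factorial : ℝ)) :=
        ((summable_nat_add_iff 1).2 (S12.rsummable (‖v‖ * ‖u‖))).mul_left _
      refine (Summable.tsum_le_tsum hbnd2 hshiftnorm hsum2).trans ?_
      rw [tsum_mul_left, ← S12.rexp_sub_one_tsum (‖v‖ * ‖u‖)]
    calc ‖F v - 1‖ = ‖(Complex.exp (-v) - 1) + ∑' k : ℕ, A (k + 1) v * u ^ (k + 1)‖ := by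
          rw [htail, hA0v]; congr 1; ring
      _ ≤ ‖Complex.exp (-v) - 1‖ + ‖∑' k : ℕ, A (k + 1) v * u ^ (k + 1)‖ := norm_add_le _ _
      _ ≤ ‖v‖ * Real.exp ‖v‖
          + (Real.exp ‖v‖ * Real.exp ‖v‖) * (Real.exp (‖v‖ * ‖u‖) - 1) := by
          gcongr
          have := S12.norm_exp_sub_one_le (-v)
          simpa using this
  -- ‖P v − 1‖ bound
  have hPbound : ∀ v : ℂ, ‖P v - 1‖
      ≤ Real.exp ((‖u - 1‖ * ‖v‖ * Real.exp ‖v‖) * G) - 1 := by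
    intro v
    have h1 := S12.norm_tprod_one_add_sub_one_le (b v) (hsum_b v)
    have h2 : Real.exp (∑' j : ℕ, ‖b v j‖)
        ≤ Real.exp ((‖u - 1‖ * ‖v‖ * Real.exp ‖v‖) * G) :=
      Real.exp_le_exp.2 (htsum_b v)
    calc ‖P v - 1‖ = ‖(∏' j : ℕ, (1 + b v j)) - 1‖ := rfl
      _ ≤ Real.exp (∑' j : ℕ, ‖b v j‖) - 1 := h1
      _ ≤ _ := by linarith
  -- tendsto of bounds
  have hg1 : Filter.Tendsto
      (fun t : ℝ => t * Real.exp t + (Real.exp t * Real.exp t) * (Real.exp (t * ‖u‖) - 1))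
      (nhds 0) (nhds 0) := by
    have hc : Continuous (fun t : ℝ =>
        t * Real.exp t + (Real.exp t * Real.exp t) * (Real.exp (t * ‖u‖) - 1)) := by
      fun_prop
    have h := hc.continuousAt (x := 0)
    have h0 : (0:ℝ) * Real.exp 0 + (Real.exp 0 * Real.exp 0) * (Real.exp (0 * ‖u‖) - 1)
        = 0 := by simp
    unfold ContinuousAt at h
    simp only at h
    rw [h0] at h
    exact h
  have hg2 : Filter.Tendsto
      (fun t : ℝ => Real.exp ((‖u - 1‖ * t * Real.exp t) * G) - 1) (nhds 0) (nhds 0) := by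
    have hc : Continuous (fun t : ℝ => Real.exp ((‖u - 1‖ * t * Real.exp t) * G) - 1) := by
      fun_prop
    have h := hc.continuousAt (x := 0)
    have h0 : Real.exp ((‖u - 1‖ * 0 * Real.exp 0) * G) - 1 = 0 := by simp
    unfold ContinuousAt at h
    simp only at h
    rw [h0] at h
    exact h
  have hFlim : Filter.Tendsto (fun m : ℕ => F (z / 2 ^ m)) Filter.atTop (nhds 1) := by
    have hnorm0 : Filter.Tendsto (fun m : ℕ => ‖F (z / 2 ^ m) - 1‖) Filter.atTop (nhds 0) := by
      refine squeeze_zero (fun m => norm_nonneg _) (fun m => hFbound (z / 2 ^ m)) ?_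
      exact hg1.comp hvnorm
    have := tendsto_zero_iff_norm_tendsto_zero.2 hnorm0
    have h2 := this.add (tendsto_const_nhds (x := (1:ℂ)))
    simpa using h2
  have hPlim : Filter.Tendsto (fun m : ℕ => P (z / 2 ^ m)) Filter.atTop (nhds 1) := by
    have hnorm0 : Filter.Tendsto (fun m : ℕ => ‖P (z / 2 ^ m) - 1‖) Filter.atTop (nhds 0) := by
      refine squeeze_zero (fun m => norm_nonneg _) (fun m => hPbound (z / 2 ^ m)) ?_
      exact hg2.comp hvnorm
    have := tendsto_zero_iff_norm_tendsto_zero.2 hnorm0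
    have h2 := this.add (tendsto_const_nhds (x := (1:ℂ)))
    simpa using h2
  -- conclude
  have hprodlim : Filter.Tendsto (fun m : ℕ => ∏ j ∈ Finset.range m, φ (z / 2 ^ (j + 1)))
      Filter.atTop (nhds (P z)) :=
    (hmult z).hasProd.tendsto_prod_nat
  have hdiff : Filter.Tendsto (fun m : ℕ => F (z / 2 ^ m) - P (z / 2 ^ m))
      Filter.atTop (nhds 0) := by
    have := hFlim.sub hPlim
    simpa using this
  have hfinal : Filter.Tendsto (fun m : ℕ => F z - P z) Filter.atTop (nhds (P z * 0)) := by
    refine Filter.Tendsto.congr (fun m => (key m).symm) (hprodlim.mul hdiff)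
  have heq : F z - P z = P z * 0 := tendsto_nhds_unique tendsto_const_nhds hfinal
  rw [mul_zero] at heq
  have hFP : F z = P z := by rwa [sub_eq_zero] at heq
  exact hFP

-- axiom check
end

section
/- (Pittel's inequality) For all r ≥ 0 and all θ with |θ| ≤ π, writing z = r e^{iθ}, one has |e^z − 1| ≤ (e^r − 1) e^{−r(1−cos θ)/2}. -/
open Complex

lemma aux_le_sinh {t : ℝ} (ht : 0 ≤ t) : t ≤ Real.sinh t := by
  rcases eq_or_lt_of_le ht with h | h
  · simp [← h]
  · exact (Real.self_lt_sinh_iff.2 h).le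

lemma aux_cosh_sub {y x : ℝ} (hy : 0 ≤ y) (hxy : y ≤ x) :
    (x ^ 2 - y ^ 2) / 2 ≤ Real.cosh x - Real.cosh y := by
  have hp : 0 ≤ (x + y) / 2 := by linarith
  have hq : 0 ≤ (x - y) / 2 := by linarith
  have h1 := aux_le_sinh hp
  have h2 := aux_le_sinh hq
  have c1 := Real.cosh_add ((x + y) / 2) ((x - y) / 2)
  have c2 := Real.cosh_sub ((x + y) / 2) ((x - y) / 2)
  have e1 : (x + y) / 2 + (x - y) / 2 = x := by ring
  have e2 : (x + y) / 2 - (x - y) / 2 = y := by ring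
  rw [e1] at c1
  rw [e2] at c2
  nlinarith [mul_le_mul h1 h2 hq (hp.trans h1)]

set_option maxHeartbeats 1000000 in
/-- Pittel's inequality: for `r ≥ 0`, `|θ| ≤ π` and `z = r e^{iθ}`,
`|e^z − 1| ≤ (e^r − 1) e^{−r(1−cos θ)/2}`. -/
theorem stmt_17 (r θ : ℝ) (hr : 0 ≤ r) (hθ : |θ| ≤ Real.pi) :
    ‖Complex.exp ((r : ℂ) * Complex.exp (θ * Complex.I)) - 1‖
      ≤ (Real.exp r - 1) * Real.exp (-(r * (1 - Real.cos θ)) / 2) := by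
  set a := r * Real.cos θ with ha
  set b := r * Real.sin θ with hb
  have hz : (r : ℂ) * Complex.exp (θ * Complex.I) = (a : ℂ) + (b : ℂ) * Complex.I := by
    rw [Complex.exp_mul_I]
    push_cast [ha, hb]
    ring
  rw [hz]
  have hexp : Complex.exp ((a : ℂ) + (b : ℂ) * Complex.I)
      = (Real.exp a * Real.cos b : ℝ) + (Real.exp a * Real.sin b : ℝ) * Complex.I := by
    rw [Complex.exp_add, Complex.exp_mul_I, ← Complex.ofReal_exp, ← Complex.ofReal_cos,
      ← Complex.ofReal_sin]
    push_cast
    ring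
  rw [hexp]
  have hA := Real.exp_pos a
  have hR := Real.exp_pos r
  have hnormsq : ‖((Real.exp a * Real.cos b : ℝ) + (Real.exp a * Real.sin b : ℝ) * Complex.I : ℂ) - 1‖ ^ 2
      = (Real.exp a * Real.cos b - 1) ^ 2 + (Real.exp a * Real.sin b) ^ 2 := by
    rw [← Complex.normSq_eq_norm_sq]
    have : ((Real.exp a * Real.cos b : ℝ) + (Real.exp a * Real.sin b : ℝ) * Complex.I : ℂ) - 1
        = ((Real.exp a * Real.cos b - 1 : ℝ) : ℂ) + ((Real.exp a * Real.sin b : ℝ) : ℂ) * Complex.I := by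
      push_cast
      ring
    rw [this, Complex.normSq_add_mul_I]
  have habs : |a| ≤ r := by
    rw [ha, abs_mul, _root_.abs_of_nonneg hr]
    calc r * |Real.cos θ| ≤ r * 1 := mul_le_mul_of_nonneg_left (Real.abs_cos_le_one θ) hr
      _ = r := mul_one r
  have hb2 : b ^ 2 = r ^ 2 - a ^ 2 := by
    have := Real.sin_sq_add_cos_sq θ
    rw [ha, hb]; nlinarith
  have hkey : Real.exp a + Real.exp (-a) + b ^ 2 ≤ Real.exp r + Real.exp (-r) := by
    have h := aux_cosh_sub (abs_nonneg a) habs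
    rw [Real.cosh_abs] at h
    rw [Real.cosh_eq, Real.cosh_eq, _root_.sq_abs a] at h
    linarith [hb2]
  have hcosb : 1 - b ^ 2 / 2 ≤ Real.cos b := Real.one_sub_sq_div_two_le_cos
  have hEa : Real.exp a * Real.exp (-a) = 1 := by rw [← Real.exp_add]; simp
  have hEr : Real.exp r * Real.exp (-r) = 1 := by rw [← Real.exp_add]; simp
  have hrhs_sq : ((Real.exp r - 1) * Real.exp (-(r * (1 - Real.cos θ)) / 2)) ^ 2
      = (Real.exp r - 1) ^ 2 * (Real.exp a * Real.exp (-r)) := by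
    rw [mul_pow, ← Real.exp_add, ← Real.exp_nat_mul]
    congr 1
    push_cast
    congr 1
    rw [ha]; ring
  have hrhs_nonneg : 0 ≤ (Real.exp r - 1) * Real.exp (-(r * (1 - Real.cos θ)) / 2) := by
    apply mul_nonneg
    · linarith [Real.one_le_exp hr]
    · exact (Real.exp_pos _).le
  have hsc := Real.sin_sq_add_cos_sq b
  have hsq : ‖(((Real.exp a * Real.cos b : ℝ) : ℂ) + ((Real.exp a * Real.sin b : ℝ) : ℂ) * Complex.I) - 1‖ ^ 2
      ≤ ((Real.exp r - 1) * Real.exp (-(r * (1 - Real.cos θ)) / 2)) ^ 2 := by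
    calc ‖(((Real.exp a * Real.cos b : ℝ) : ℂ) + ((Real.exp a * Real.sin b : ℝ) : ℂ) * Complex.I) - 1‖ ^ 2
        = (Real.exp a * Real.cos b - 1) ^ 2 + (Real.exp a * Real.sin b) ^ 2 := hnormsq
      _ = (Real.exp a) ^ 2 - 2 * Real.exp a * Real.cos b + 1 := by linear_combination (Real.exp a) ^ 2 * hsc
      _ ≤ (Real.exp a - 1) ^ 2 + Real.exp a * b ^ 2 := by nlinarith
      _ ≤ (Real.exp r - 1) ^ 2 * (Real.exp a * Real.exp (-r)) := by
          have e3 : (Real.exp r - 1) ^ 2 * (Real.exp a * Real.exp (-r))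
              = Real.exp a * Real.exp r - 2 * Real.exp a + Real.exp a * Real.exp (-r) := by
            linear_combination (Real.exp a * Real.exp r - 2 * Real.exp a) * hEr
          rw [e3]
          nlinarith [mul_le_mul_of_nonneg_left hkey hA.le, hEa]
      _ = ((Real.exp r - 1) * Real.exp (-(r * (1 - Real.cos θ)) / 2)) ^ 2 := hrhs_sq.symm
  calc ‖(((Real.exp a * Real.cos b : ℝ) : ℂ) + ((Real.exp a * Real.sin b : ℝ) : ℂ) * Complex.I) - 1‖
      = Real.sqrt (‖(((Real.exp a * Real.cos b : ℝ) : ℂ) + ((Real.exp a * Real.sin b : ℝ) : ℂ) * Complex.I) - 1‖ ^ 2) :=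
        (Real.sqrt_sq (norm_nonneg _)).symm
    _ ≤ Real.sqrt (((Real.exp r - 1) * Real.exp (-(r * (1 - Real.cos θ)) / 2)) ^ 2) :=
        Real.sqrt_le_sqrt hsq
    _ = (Real.exp r - 1) * Real.exp (-(r * (1 - Real.cos θ)) / 2) := Real.sqrt_sq hrhs_nonneg
end

section
/- Let 0 < p ≤ q = 1 − p and fix ε ∈ (0, π/2). Then there exists ε₂ > 0 such that for all r ≥ 0 and all θ with ε ≤ |θ| ≤ π, writing z = re^{iθ}, one has |e^{qz} − e^{(q−p)z}| ≤ e^{−ε₂ r} (e^{qr} − e^{(q−p)r}). -/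
open Complex

lemma mono_aux : MonotoneOn (fun t : ℝ => Real.cosh t - t^2/2) (Set.Ici 0) := by
  apply monotoneOn_of_deriv_nonneg (convex_Ici 0)
  · exact (Real.continuous_cosh.sub ((continuous_pow 2).div_const 2)).continuousOn
  · intro t ht
    exact ((Real.hasDerivAt_cosh t).sub
      ((hasDerivAt_pow 2 t).div_const 2)).differentiableAt.differentiableWithinAt
  · intro t ht
    have h := ((Real.hasDerivAt_cosh t).sub ((hasDerivAt_pow 2 t).div_const 2)).deriv
    rw [show deriv (fun t : ℝ => Real.cosh t - t^2/2) t = _ from h]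
    simp only [pow_one, Nat.cast_ofNat]
    have ht' : 0 ≤ t := le_of_lt (by simpa using ht)
    have := Real.self_le_sinh_iff.mpr ht'
    nlinarith

lemma pittel (ρ c s : ℝ) (hρ : 0 ≤ ρ) (hcs : c^2 + s^2 = 1) :
    ‖Complex.exp ((ρ*c : ℝ) + (ρ*s : ℝ)*Complex.I) - 1‖
      ≤ (Real.exp ρ - 1) * Real.exp (-(ρ*(1-c)/2)) := by
  have hc1 : |c| ≤ 1 := by nlinarith [abs_nonneg c, _root_.sq_abs c, sq_nonneg s]
  have hmono : Real.cosh (ρ*c) - (ρ*c)^2/2 ≤ Real.cosh ρ - ρ^2/2 := by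
    have h1 : Real.cosh (ρ*c) = Real.cosh (ρ*|c|) := by
      rcases abs_choice c with h | h
      · rw [h]
      · rw [h]; rw [show ρ * -c = -(ρ*c) by ring, Real.cosh_neg]
    have h2 : (ρ*c)^2 = (ρ*|c|)^2 := by rw [mul_pow, mul_pow, _root_.sq_abs]
    rw [h1, h2]
    exact mono_aux (Set.mem_Ici.mpr (by positivity)) (Set.mem_Ici.mpr hρ)
      (by nlinarith [abs_nonneg c])
  have hcos : 1 - (ρ*s)^2/2 ≤ Real.cos (ρ*s) := Real.one_sub_sq_div_two_le_cos
  set a := Real.exp (ρ*c) with ha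
  set b := Real.exp ρ with hb
  have hA : Real.exp (-(ρ*c)) = a⁻¹ := by rw [Real.exp_neg]
  have hB : Real.exp (-ρ) = b⁻¹ := by rw [Real.exp_neg]
  have ha0 : 0 < a := Real.exp_pos _
  have hb0 : 0 < b := Real.exp_pos _
  have hb1 : 1 ≤ b := Real.one_le_exp hρ
  have haa : a * a⁻¹ = 1 := mul_inv_cancel₀ ha0.ne'
  have hkey : a^2 + 1 + a*(ρ*s)^2 ≤ a*(b + b⁻¹) := by
    have hch1 : Real.cosh ρ = (b + b⁻¹)/2 := by rw [Real.cosh_eq, hB]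
    have hch2 : Real.cosh (ρ*c) = (a + a⁻¹)/2 := by rw [Real.cosh_eq, hA]
    have hs2 : s^2 = 1 - c^2 := by linarith
    have h3 : a + a⁻¹ + ρ^2*s^2 ≤ b + b⁻¹ := by nlinarith
    nlinarith [mul_le_mul_of_nonneg_left h3 ha0.le]
  have hM0 : 0 ≤ (Real.exp ρ - 1) * Real.exp (-(ρ*(1-c)/2)) :=
    mul_nonneg (by linarith) (Real.exp_pos _).le
  have hd : Real.exp (-(ρ*(1-c)/2)) ^ 2 = b⁻¹ * a := by
    rw [sq, ← Real.exp_add, show -(ρ*(1-c)/2) + -(ρ*(1-c)/2) = -ρ + ρ*c by ring,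
      Real.exp_add, hB]
  -- squared inequality
  have hsq : ‖Complex.exp ((ρ*c : ℝ) + (ρ*s : ℝ)*Complex.I) - 1‖^2
      ≤ ((Real.exp ρ - 1) * Real.exp (-(ρ*(1-c)/2)))^2 := by
    set d := Real.exp (-(ρ*(1-c)/2)) with hdd
    rw [Complex.sq_norm, Complex.normSq_apply]
    simp only [Complex.sub_re, Complex.sub_im, Complex.one_re, Complex.one_im,
      Complex.exp_re, Complex.exp_im, Complex.add_re, Complex.add_im,
      Complex.ofReal_re, Complex.ofReal_im, Complex.mul_re, Complex.mul_im,
      Complex.I_re, Complex.I_im, mul_zero, zero_mul, sub_zero, zero_add, mul_one, add_zero]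
    have htrig : Real.sin (ρ*s)^2 + Real.cos (ρ*s)^2 = 1 := Real.sin_sq_add_cos_sq _
    have hbb : b * b⁻¹ = 1 := mul_inv_cancel₀ hb0.ne'
    have h5 : (Real.exp (ρ*c) * Real.cos (ρ*s) - 1) * (Real.exp (ρ*c) * Real.cos (ρ*s) - 1)
        + Real.exp (ρ*c) * Real.sin (ρ*s) * (Real.exp (ρ*c) * Real.sin (ρ*s))
        = a^2 - 2*a*Real.cos (ρ*s) + 1 := by
      linear_combination a^2 * htrig
    have h6 : ((Real.exp ρ - 1)*d)^2 = a*b - 2*a + a*b⁻¹ := by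
      linear_combination (Real.exp ρ - 1)^2 * hd + (a*b - 2*a) * hbb
    have h7 := mul_le_mul_of_nonneg_left hcos (le_of_lt ha0)
    rw [h5, h6]
    nlinarith [h7, hkey]
  calc ‖Complex.exp ((ρ*c : ℝ) + (ρ*s : ℝ)*Complex.I) - 1‖
      = Real.sqrt (‖Complex.exp ((ρ*c : ℝ) + (ρ*s : ℝ)*Complex.I) - 1‖^2) :=
        (Real.sqrt_sq (norm_nonneg _)).symm
    _ ≤ Real.sqrt (((Real.exp ρ - 1) * Real.exp (-(ρ*(1-c)/2)))^2) := Real.sqrt_le_sqrt hsq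
    _ = (Real.exp ρ - 1) * Real.exp (-(ρ*(1-c)/2)) := Real.sqrt_sq hM0

/-- For `0 < p ≤ q = 1 − p` and `ε ∈ (0, π/2)`, there exists `ε₂ > 0` such that
for `z = re^{iθ}` with `r ≥ 0` and `ε ≤ |θ| ≤ π`,
`|e^{qz} − e^{(q−p)z}| ≤ e^{−ε₂ r} (e^{qr} − e^{(q−p)r})`. -/
theorem stmt_18 (p q ε : ℝ) (hp : 0 < p) (hpq : p ≤ q) (hq : q = 1 - p)
    (hε : 0 < ε) (hε2 : ε < Real.pi / 2) :
    ∃ ε₂ : ℝ, 0 < ε₂ ∧ ∀ r θ : ℝ, 0 ≤ r → ε ≤ |θ| → |θ| ≤ Real.pi →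
      ‖Complex.exp ((q : ℂ) * ((r : ℂ) * Complex.exp (θ * Complex.I)))
          - Complex.exp (((q : ℂ) - p) * ((r : ℂ) * Complex.exp (θ * Complex.I)))‖
        ≤ Real.exp (-(ε₂ * r)) * (Real.exp (q * r) - Real.exp ((q - p) * r)) := by
  have hcosε : Real.cos ε < 1 := by
    have h := Real.cos_lt_cos_of_nonneg_of_le_pi (le_refl 0)
      (by linarith [Real.pi_pos]) hε
    rwa [Real.cos_zero] at h
  refine ⟨(q - p/2)*(1 - Real.cos ε), by nlinarith, ?_⟩
  intro r θ hr hθ1 hθ2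
  set c := Real.cos θ with hc
  set s := Real.sin θ with hs
  have hccos : c ≤ Real.cos ε := by
    rw [hc, ← Real.cos_abs]
    exact Real.cos_le_cos_of_nonneg_of_le_pi hε.le hθ2 hθ1
  have hz : (r : ℂ) * Complex.exp (↑θ * I) = ↑(r*c) + ↑(r*s)*I := by
    rw [hc, hs, Complex.exp_mul_I]
    push_cast [Complex.ofReal_cos, Complex.ofReal_sin]
    ring
  -- factor
  have hfac : Complex.exp ((q : ℂ) * ((r : ℂ) * Complex.exp (θ * Complex.I)))
      - Complex.exp (((q : ℂ) - p) * ((r : ℂ) * Complex.exp (θ * Complex.I)))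
      = Complex.exp (((q : ℂ) - p) * ((r : ℂ) * Complex.exp (θ * Complex.I)))
        * (Complex.exp ((p : ℂ) * ((r : ℂ) * Complex.exp (θ * Complex.I))) - 1) := by
    rw [mul_sub, mul_one, ← Complex.exp_add]
    ring_nf
  rw [hfac, norm_mul]
  have hre : ‖Complex.exp (((q : ℂ) - p) * ((r : ℂ) * Complex.exp (θ * Complex.I)))‖
      = Real.exp ((q-p)*(r*c)) := by
    rw [Complex.norm_exp, hz]
    congr 1
    push_cast
    simp [Complex.add_re, Complex.mul_re]
  have hpz : (p : ℂ) * ((r : ℂ) * Complex.exp (θ * Complex.I))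
      = ↑((p*r)*c) + ↑((p*r)*s)*I := by
    rw [hz]; push_cast; ring
  have hpit : ‖Complex.exp ((p : ℂ) * ((r : ℂ) * Complex.exp (θ * Complex.I))) - 1‖
      ≤ (Real.exp (p*r) - 1) * Real.exp (-((p*r)*(1-c)/2)) := by
    rw [hpz]
    exact pittel (p*r) c s (by positivity) (by rw [hc, hs]; exact Real.cos_sq_add_sin_sq θ)
  rw [hre]
  have h1 : Real.exp ((q-p)*(r*c)) * ‖Complex.exp ((p : ℂ) * ((r : ℂ) * Complex.exp (θ * Complex.I))) - 1‖
      ≤ Real.exp ((q-p)*(r*c)) * ((Real.exp (p*r) - 1) * Real.exp (-((p*r)*(1-c)/2))) :=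
    mul_le_mul_of_nonneg_left hpit (Real.exp_pos _).le
  refine h1.trans ?_
  have hexp1 : Real.exp (q*r) - Real.exp ((q-p)*r) = Real.exp ((q-p)*r) * (Real.exp (p*r) - 1) := by
    rw [mul_sub, mul_one, ← Real.exp_add]; ring_nf
  rw [hexp1]
  have hA : Real.exp ((q-p)*(r*c)) * ((Real.exp (p*r) - 1) * Real.exp (-((p*r)*(1-c)/2)))
      = Real.exp ((q-p)*(r*c) - (p*r)*(1-c)/2) * (Real.exp (p*r) - 1) := by
    rw [Real.exp_sub, div_eq_mul_inv, Real.exp_neg]; ring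
  have hB : Real.exp (-((q - p/2)*(1 - Real.cos ε) * r)) * (Real.exp ((q-p)*r) * (Real.exp (p*r) - 1))
      = Real.exp (-((q - p/2)*(1 - Real.cos ε) * r) + (q-p)*r) * (Real.exp (p*r) - 1) := by
    rw [Real.exp_add]; ring
  rw [hA, hB]
  apply mul_le_mul_of_nonneg_right
  · apply Real.exp_le_exp.mpr
    nlinarith [mul_nonneg hr (sub_nonneg.mpr hccos), mul_nonneg (mul_nonneg hr (sub_nonneg.mpr hccos)) (by linarith : (0:ℝ) ≤ q - p/2)]
  · have := Real.one_le_exp (by positivity : (0:ℝ) ≤ p*r)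
    linarith
end
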